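/- arXiv:2605.21471 — 3 statements merged into one kernel-verified Lean document; each statement's English description precedes it below -/
import Mathlib

section
/- For every graph H on k vertices there exists η > 0 such that for every n sufficiently large, every graph G on n vertices with e(G) ≥ (1-η)·binom(n,2), every balanced partition V(G) = A ∪ B with |A| = |B| = n/2, and every 2-colouring of the edges of G with colours red and blue, there exist at least η·n^k subgraphs H' of G isomorphic to H such that either H' is monochromatic red and |V(H') ∩ A| ≥ α(H), or H' is monochromatic blue and |V(H') ∩ B| ≥ α(H). -/
open SimpleGraph Finset


lemma myRamsey : ∀ s t : ℕ, ∃ R : ℕ, ∀ {α : Type} [DecidableEq α] (V : Finset α)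
    (c : α → α → Bool), (∀ x y, c x y = c y x) → R ≤ V.card →
    ∃ S ⊆ V, (S.card = s ∧ ∀ x ∈ S, ∀ y ∈ S, x ≠ y → c x y = true) ∨
             (S.card = t ∧ ∀ x ∈ S, ∀ y ∈ S, x ≠ y → c x y = false) := by
  intro s
  induction s with
  | zero =>
    intro t
    exact ⟨0, fun V c _ _ => ⟨∅, empty_subset _, Or.inl ⟨rfl, by simp⟩⟩⟩
  | succ s ihs =>
    intro t
    induction t with
    | zero =>
      exact ⟨0, fun V c _ _ => ⟨∅, empty_subset _, Or.inr ⟨rfl, by simp⟩⟩⟩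
    | succ t iht =>
      obtain ⟨R₁, hR₁⟩ := ihs (t + 1)
      obtain ⟨R₂, hR₂⟩ := iht
      refine ⟨R₁ + R₂ + 1, ?_⟩
      intro α _ V c hsym hV
      have hVne : V.Nonempty := card_pos.mp (by omega)
      obtain ⟨v, hv⟩ := hVne
      classical
      set Vr := (V.erase v).filter (fun x => c v x = true) with hVrdef
      set Vb := (V.erase v).filter (fun x => c v x ≠ true) with hVbdef
      have hsplit : Vr.card + Vb.card = V.card - 1 := by
        rw [hVrdef, hVbdef, card_filter_add_card_filter_not, card_erase_of_mem hv]
      have hcase : R₁ ≤ Vr.card ∨ R₂ ≤ Vb.card := by omega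
      rcases hcase with h | h
      · obtain ⟨S, hS, hSP⟩ := hR₁ Vr c hsym h
        rcases hSP with ⟨hcard, hred⟩ | ⟨hcard, hblue⟩
        · refine ⟨insert v S, ?_, Or.inl ⟨?_, ?_⟩⟩
          · intro x hx
            rcases mem_insert.mp hx with rfl | hx
            · exact hv
            · exact mem_of_mem_erase (mem_of_mem_filter _ (hS hx))
          · rw [card_insert_of_notMem, hcard]
            intro hvS
            exact (notMem_erase v V) (mem_of_mem_filter _ (hS hvS))
          · intro x hx y hy hxy
            rcases mem_insert.mp hx with hx | hx
            · rcases mem_insert.mp hy with hy | hy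
              · exact absurd (hx.trans hy.symm) hxy
              · rw [hx]; exact (mem_filter.mp (hS hy)).2
            · rcases mem_insert.mp hy with hy | hy
              · rw [hy, hsym]; exact (mem_filter.mp (hS hx)).2
              · exact hred x hx y hy hxy
        · exact ⟨S, hS.trans (fun x hx => mem_of_mem_erase (mem_of_mem_filter _ hx)),
            Or.inr ⟨hcard, hblue⟩⟩
      · obtain ⟨S, hS, hSP⟩ := hR₂ Vb c hsym h
        rcases hSP with ⟨hcard, hred⟩ | ⟨hcard, hblue⟩
        · exact ⟨S, hS.trans (fun x hx => mem_of_mem_erase (mem_of_mem_filter _ hx)),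
            Or.inl ⟨hcard, hred⟩⟩
        · refine ⟨insert v S, ?_, Or.inr ⟨?_, ?_⟩⟩
          · intro x hx
            rcases mem_insert.mp hx with rfl | hx
            · exact hv
            · exact mem_of_mem_erase (mem_of_mem_filter _ (hS hx))
          · rw [card_insert_of_notMem, hcard]
            intro hvS
            exact (notMem_erase v V) (mem_of_mem_filter _ (hS hvS))
          · intro x hx y hy hxy
            rcases mem_insert.mp hx with hx | hx
            · rcases mem_insert.mp hy with hy | hy
              · exact absurd (hx.trans hy.symm) hxy
              · rw [hx] at hxy ⊢; have := (mem_filter.mp (hS hy)).2; simpa using this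
            · rcases mem_insert.mp hy with hy | hy
              · rw [hy, hsym]; have := (mem_filter.mp (hS hx)).2; simpa using this
              · exact hblue x hx y hy hxy


lemma myMajority {α : Type} [DecidableEq α] (c : α → α → Bool) :
    ∀ (m p : ℕ) (X Y : Finset α), m ≤ Y.card → p * 2 ^ m ≤ X.card →
    ∃ Y' ⊆ Y, Y'.card = m ∧ ∃ X' ⊆ X, p ≤ X'.card ∧
      ∀ y ∈ Y', (∀ x ∈ X', c y x = true) ∨ (∀ x ∈ X', c y x = false) := by
  intro m
  induction m with
  | zero =>
    intro p X Y _ hX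
    exact ⟨∅, empty_subset _, rfl, X, Subset.rfl, by simpa using hX, by simp⟩
  | succ m ih =>
    intro p X Y hY hX
    have hYne : Y.Nonempty := card_pos.mp (by omega)
    obtain ⟨y, hy⟩ := hYne
    set Xr := X.filter (fun x => c y x = true) with hXr
    set Xb := X.filter (fun x => ¬ (c y x = true)) with hXb
    have hsplit : Xr.card + Xb.card = X.card := by
      rw [hXr, hXb, card_filter_add_card_filter_not]
    have hcase : p * 2 ^ m ≤ Xr.card ∨ p * 2 ^ m ≤ Xb.card := by
      have he : p * 2 ^ (m + 1) = p * 2 ^ m + p * 2 ^ m := by ring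
      rw [he] at hX; omega
    have hYe : m ≤ (Y.erase y).card := by rw [card_erase_of_mem hy]; omega
    rcases hcase with h | h
    · obtain ⟨Y', hY'sub, hY'card, X', hX'sub, hX'card, hmono⟩ := ih p Xr (Y.erase y) hYe h
      refine ⟨insert y Y', ?_, ?_, X', hX'sub.trans (filter_subset _ _), hX'card, ?_⟩
      · intro z hz
        rcases mem_insert.mp hz with hz | hz
        · rw [hz]; exact hy
        · exact mem_of_mem_erase (hY'sub hz)
      · rw [card_insert_of_notMem (fun hyY' => (notMem_erase y Y) (hY'sub hyY')), hY'card]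
      · intro z hz
        rcases mem_insert.mp hz with hz | hz
        · subst hz
          exact Or.inl (fun x hx => (mem_filter.mp (hX'sub hx)).2)
        · exact hmono z hz
    · obtain ⟨Y', hY'sub, hY'card, X', hX'sub, hX'card, hmono⟩ := ih p Xb (Y.erase y) hYe h
      refine ⟨insert y Y', ?_, ?_, X', hX'sub.trans (filter_subset _ _), hX'card, ?_⟩
      · intro z hz
        rcases mem_insert.mp hz with hz | hz
        · rw [hz]; exact hy
        · exact mem_of_mem_erase (hY'sub hz)
      · rw [card_insert_of_notMem (fun hyY' => (notMem_erase y Y) (hY'sub hyY')), hY'card]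
      · intro z hz
        rcases mem_insert.mp hz with hz | hz
        · subst hz
          refine Or.inr (fun x hx => ?_)
          have := (mem_filter.mp (hX'sub hx)).2
          simpa using this
        · exact hmono z hz



open scoped Classical in
/-- The independence number of a finite graph. -/
noncomputable def indepNum {V : Type*} [Fintype V] (H : SimpleGraph V) : ℕ :=
  Nat.findGreatest (fun m => ∃ s : Finset V, s.card = m ∧
    ∀ x ∈ s, ∀ y ∈ s, x ≠ y → ¬ H.Adj x y) (Fintype.card V)

open scoped Classical in
lemma indepNum_le_card {V : Type*} [Fintype V] (H : SimpleGraph V) :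
    _root_.indepNum H ≤ Fintype.card V := Nat.findGreatest_le _

open scoped Classical in
lemma exists_indepSet {V : Type*} [Fintype V] (H : SimpleGraph V) :
    ∃ s : Finset V, s.card = _root_.indepNum H ∧ ∀ x ∈ s, ∀ y ∈ s, x ≠ y → ¬ H.Adj x y := by
  have h0 : (fun m => ∃ s : Finset V, s.card = m ∧
      ∀ x ∈ s, ∀ y ∈ s, x ≠ y → ¬ H.Adj x y) 0 := ⟨∅, by simp⟩
  exact Nat.findGreatest_spec (P := fun m => ∃ s : Finset V, s.card = m ∧
    ∀ x ∈ s, ∀ y ∈ s, x ≠ y → ¬ H.Adj x y) (Nat.zero_le (Fintype.card V)) h0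

lemma buildCopy {n : ℕ} {W : Type*} [Fintype W] (H : SimpleGraph W) (G : SimpleGraph (Fin n))
    (f : W → Fin n) (hinj : Function.Injective f)
    (hadj : ∀ a b, H.Adj a b → G.Adj (f a) (f b)) :
    ∃ F : G.Subgraph, Nonempty (H ≃g F.coe) ∧ F.verts = Set.range f ∧
      (∀ e ∈ F.edgeSet, ∃ a b, H.Adj a b ∧ e = s(f a, f b)) := by
  refine ⟨⟨Set.range f, fun x y => ∃ a b, H.Adj a b ∧ f a = x ∧ f b = y, ?_, ?_, ?_⟩, ?_, rfl, ?_⟩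
  · rintro x y ⟨a, b, hab, rfl, rfl⟩
    exact hadj a b hab
  · rintro x y ⟨a, b, hab, rfl, rfl⟩
    exact ⟨a, rfl⟩
  · constructor
    rintro x y ⟨a, b, hab, rfl, rfl⟩
    exact ⟨b, a, hab.symm, rfl, rfl⟩
  · refine ⟨⟨Equiv.ofInjective f hinj, ?_⟩⟩
    intro a b
    constructor
    · rintro ⟨a', b', hab, ha, hb⟩
      have ha' : a' = a := hinj (by simpa using ha)
      have hb' : b' = b := hinj (by simpa using hb)
      rw [ha', hb'] at hab
      exact hab
    · intro h
      exact ⟨a, b, h, rfl, rfl⟩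
  · intro e he
    induction e with
    | h x y =>
      rw [SimpleGraph.Subgraph.mem_edgeSet] at he
      obtain ⟨a, b, hab, rfl, rfl⟩ := he
      exact ⟨a, b, hab, rfl⟩

lemma partsEmbed {W : Type*} [Fintype W] [DecidableEq W] {n : ℕ}
    (I : Finset W) (P Q : Finset (Fin n)) (hP : I.card = P.card) (hQ : Iᶜ.card = Q.card)
    (hdisj : ∀ x ∈ P, x ∉ Q) :
    ∃ f : W → Fin n, Function.Injective f ∧ (∀ a ∈ I, f a ∈ P) ∧ (∀ a, a ∉ I → f a ∈ Q) := by
  have e₁ : {x // x ∈ I} ≃ {x // x ∈ P} := Finset.equivOfCardEq hP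
  have e₂ : {x // x ∈ Iᶜ} ≃ {x // x ∈ Q} := Finset.equivOfCardEq hQ
  classical
  refine ⟨fun a => if h : a ∈ I then (e₁ ⟨a, h⟩ : Fin n) else (e₂ ⟨a, by simpa using h⟩ : Fin n),
    ?_, ?_, ?_⟩
  · intro a b hab
    simp only [] at hab
    by_cases ha : a ∈ I <;> by_cases hb : b ∈ I
    · rw [dif_pos ha, dif_pos hb] at hab
      have := e₁.injective (Subtype.ext hab)
      simpa using congrArg Subtype.val this
    · rw [dif_pos ha, dif_neg hb] at hab
      exact absurd ((e₂ ⟨b, by simpa using hb⟩).2) (hab ▸ hdisj _ (e₁ ⟨a, ha⟩).2)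
    · rw [dif_neg ha, dif_pos hb] at hab
      exact absurd ((e₂ ⟨a, by simpa using ha⟩).2) (hab.symm ▸ hdisj _ (e₁ ⟨b, hb⟩).2)
    · rw [dif_neg ha, dif_neg hb] at hab
      have := e₂.injective (Subtype.ext hab)
      simpa using congrArg Subtype.val this
  · intro a ha
    simp only [dif_pos ha]
    exact (e₁ ⟨a, ha⟩).2
  · intro a ha
    simp only [dif_neg ha]
    exact (e₂ ⟨a, by simpa using ha⟩).2

lemma assemble {n k : ℕ} {W : Type*} [Fintype W] [DecidableEq W] (H : SimpleGraph W)
    (hk : Fintype.card W = k) (G : SimpleGraph (Fin n)) (χ : Sym2 (Fin n) → Bool)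
    (Aside : Set (Fin n)) (b : Bool)
    (I : Finset W) (hIcard : I.card = _root_.indepNum H)
    (hIind : ∀ a ∈ I, ∀ c ∈ I, a ≠ c → ¬ H.Adj a c)
    (P Q : Finset (Fin n)) (hPcard : I.card = P.card) (hQcard : Iᶜ.card = Q.card)
    (hdisj : ∀ x ∈ P, x ∉ Q)
    (hQint : ∀ x ∈ Q, ∀ y ∈ Q, x ≠ y → G.Adj x y ∧ χ s(x, y) = b)
    (hPQ : ∀ x ∈ P, ∀ y ∈ Q, G.Adj x y ∧ χ s(x, y) = b)
    (hside : ∀ x ∈ P, x ∈ Aside) :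
    ∃ F : G.Subgraph, Nonempty (H ≃g F.coe) ∧ (∀ e ∈ F.edgeSet, χ e = b) ∧
      _root_.indepNum H ≤ (F.verts ∩ Aside).ncard ∧ F.verts ⊆ ↑(P ∪ Q) ∧ F.verts.ncard = k := by
  obtain ⟨f, hinj, hfI, hfIc⟩ := partsEmbed I P Q hPcard hQcard hdisj
  have key : ∀ a c, H.Adj a c → G.Adj (f a) (f c) ∧ χ s(f a, f c) = b := by
    intro a c hac
    by_cases ha : a ∈ I <;> by_cases hc : c ∈ I
    · exact absurd hac (hIind a ha c hc hac.ne)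
    · exact hPQ _ (hfI a ha) _ (hfIc c hc)
    · have := hPQ _ (hfI c hc) _ (hfIc a ha)
      exact ⟨this.1.symm, by rw [Sym2.eq_swap]; exact this.2⟩
    · exact hQint _ (hfIc a ha) _ (hfIc c hc) (fun h => hac.ne (hinj h))
  obtain ⟨F, hiso, hverts, hedges⟩ := buildCopy H G f hinj (fun a c h => (key a c h).1)
  refine ⟨F, hiso, ?_, ?_, ?_, ?_⟩
  · intro e he
    obtain ⟨a, c, hac, rfl⟩ := hedges e he
    exact (key a c hac).2
  · have himg : f '' ↑I ⊆ F.verts ∩ Aside := by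
      rintro x ⟨a, ha, rfl⟩
      exact ⟨hverts ▸ Set.mem_range_self a, hside _ (hfI a (by simpa using ha))⟩
    calc _root_.indepNum H = (f '' ↑I).ncard := by
          rw [Set.ncard_image_of_injective _ hinj, Set.ncard_coe_finset, hIcard]
      _ ≤ (F.verts ∩ Aside).ncard := Set.ncard_le_ncard himg (Set.toFinite _)
  · rw [hverts]
    rintro x ⟨a, rfl⟩
    by_cases ha : a ∈ I
    · simp only [Finset.coe_union, Set.mem_union]
      exact Or.inl (hfI a ha)
    · simp only [Finset.coe_union, Set.mem_union]
      exact Or.inr (hfIc a ha)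
  · rw [hverts, ← Set.image_univ, Set.ncard_image_of_injective _ hinj, Set.ncard_univ,
      Nat.card_eq_fintype_card, hk]

lemma onecopy {n k : ℕ} {W : Type*} [Fintype W] [DecidableEq W] (H : SimpleGraph W)
    (hk : Fintype.card W = k) (G : SimpleGraph (Fin n)) (χ : Sym2 (Fin n) → Bool)
    (A : Finset (Fin n))
    (I : Finset W) (hIcard : I.card = _root_.indepNum H)
    (hIind : ∀ a ∈ I, ∀ c ∈ I, a ≠ c → ¬ H.Adj a c)
    (T R₁ R₂ : ℕ) (hT1 : k * 2 ^ k ≤ T) (hT2 : k ≤ T)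
    (hR₁ : ∀ (V : Finset (Fin n)) (c : Fin n → Fin n → Bool), (∀ x y, c x y = c y x) →
      R₁ ≤ V.card → ∃ S ⊆ V, (S.card = k ∧ ∀ x ∈ S, ∀ y ∈ S, x ≠ y → c x y = true) ∨
        (S.card = T ∧ ∀ x ∈ S, ∀ y ∈ S, x ≠ y → c x y = false))
    (hR₂ : ∀ (V : Finset (Fin n)) (c : Fin n → Fin n → Bool), (∀ x y, c x y = c y x) →
      R₂ ≤ V.card → ∃ S ⊆ V, (S.card = T ∧ ∀ x ∈ S, ∀ y ∈ S, x ≠ y → c x y = true) ∨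
        (S.card = k ∧ ∀ x ∈ S, ∀ y ∈ S, x ≠ y → c x y = false))
    (S₁ S₂ : Finset (Fin n)) (hS₁A : S₁ ⊆ A) (hS₂A : ∀ x ∈ S₂, x ∉ A)
    (hS₁card : R₁ ≤ S₁.card) (hS₂card : R₂ ≤ S₂.card)
    (hcomplete : ∀ x ∈ S₁ ∪ S₂, ∀ y ∈ S₁ ∪ S₂, x ≠ y → G.Adj x y) :
    ∃ F : G.Subgraph,
      (Nonempty (H ≃g F.coe) ∧
        ((∀ e ∈ F.edgeSet, χ e = true) ∧ _root_.indepNum H ≤ (F.verts ∩ ↑A).ncard ∨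
         (∀ e ∈ F.edgeSet, χ e = false) ∧
           _root_.indepNum H ≤ (F.verts ∩ (↑A : Set (Fin n))ᶜ).ncard)) ∧
      F.verts ⊆ ↑(S₁ ∪ S₂) ∧ F.verts.ncard = k := by
  classical
  set α := _root_.indepNum H with hα
  have hαk : α ≤ k := by
    have := indepNum_le_card H; omega
  have hIc : Iᶜ.card = k - α := by
    rw [Finset.card_compl, hk, hIcard]
  set c : Fin n → Fin n → Bool := fun x y => χ s(x, y) with hc
  have hcsym : ∀ x y, c x y = c y x := fun x y => by rw [hc]; simp only; rw [Sym2.eq_swap]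
  have hadj : ∀ {x y}, x ∈ S₁ ∪ S₂ → y ∈ S₁ ∪ S₂ → x ≠ y → G.Adj x y := by
    intro x y hx hy hxy; exact hcomplete x hx y hy hxy
  -- helper for disjointness of subsets of S₁ and S₂
  have hdisj12 : ∀ x y : Fin n, x ∈ S₁ → y ∈ S₂ → x ≠ y := by
    intro x y hx hy h
    exact hS₂A y hy (hS₁A (h ▸ hx))
  obtain ⟨S, hSsub, hScase⟩ := hR₁ S₁ c hcsym hS₁card
  rcases hScase with ⟨hScard, hSred⟩ | ⟨hScard, hSblue⟩
  · -- red K_k inside S₁ ⊆ A : all-red copy entirely in A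
    obtain ⟨P, hPsub, hPcard⟩ := Finset.exists_subset_card_eq (hScard ▸ hαk : α ≤ S.card)
    set Q := S \ P with hQ
    have hQsub : Q ⊆ S := sdiff_subset
    have hQcard : Q.card = k - α := by rw [hQ, card_sdiff_of_subset hPsub, hScard, hPcard]
    have hSin : S ⊆ S₁ ∪ S₂ := hSsub.trans subset_union_left
    obtain ⟨F, hiso, hcol, hind, hsub, hcard⟩ := assemble H hk G χ (↑A) true I hIcard hIind P Q
      (by rw [hIcard, hPcard]) (by rw [hIc, hQcard])
      (fun x hx hx' => (mem_sdiff.mp hx').2 hx)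
      (fun x hx y hy hxy => ⟨hadj (hSin (hQsub hx)) (hSin (hQsub hy)) hxy,
        hSred x (hQsub hx) y (hQsub hy) hxy⟩)
      (fun x hx y hy => by
        have hxy : x ≠ y := fun h => (mem_sdiff.mp hy).2 (h ▸ hx)
        exact ⟨hadj (hSin (hPsub hx)) (hSin (hQsub hy)) hxy,
          hSred x (hPsub hx) y (hQsub hy) hxy⟩)
      (fun x hx => hS₁A (hSsub (hPsub hx)))
    refine ⟨F, ⟨hiso, Or.inl ⟨hcol, hind⟩⟩, hsub.trans ?_, hcard⟩
    intro x hx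
    simp only [Finset.coe_union, Set.mem_union] at hx ⊢
    rcases hx with hx | hx
    · exact Or.inl (hSsub (hPsub hx))
    · exact Or.inl (hSsub (hQsub hx))
  · -- blue K_T =: X' inside S₁
    set X' := S with hX'
    obtain ⟨S', hS'sub, hS'case⟩ := hR₂ S₂ c hcsym hS₂card
    rcases hS'case with ⟨hS'card, hS'red⟩ | ⟨hS'card, hS'blue⟩
    · -- red K_T =: Y' inside S₂ ; majority argument
      set Y' := S' with hY'
      obtain ⟨Y'', hY''sub, hY''card, X'', hX''sub, hX''card, hmono⟩ :=
        myMajority (fun y x => c y x) k k X' Y' (by omega) (by omega)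
      set Yr := Y''.filter (fun y => ∀ x ∈ X'', c y x = true) with hYr
      set Yb := Y'' \ Yr with hYb
      have hYrsub : Yr ⊆ Y'' := filter_subset _ _
      have hYbsub : Yb ⊆ Y'' := sdiff_subset
      have hYbblue : ∀ y ∈ Yb, ∀ x ∈ X'', c y x = false := by
        intro y hy x hx
        have hy' := mem_sdiff.mp hy
        rcases hmono y hy'.1 with h | h
        · exact absurd (mem_filter.mpr ⟨hy'.1, h⟩) hy'.2
        · exact h x hx
      have hsplit : Yr.card + Yb.card = k := by
        rw [hYb, card_sdiff_of_subset hYrsub, hY''card]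
        have := card_le_card hYrsub
        omega
      have hX''S₁ : X'' ⊆ S₁ := hX''sub.trans hSsub
      have hY''S₂ : Y'' ⊆ S₂ := hY''sub.trans hS'sub
      by_cases hcase : k - α ≤ Yr.card
      · -- red copy: I ↦ P ⊆ X'' (⊆ A), rest ↦ Q ⊆ Yr (red clique in S₂)
        obtain ⟨P, hPsub, hPcard⟩ := Finset.exists_subset_card_eq (le_trans hαk hX''card)
        obtain ⟨Q, hQsub, hQcard⟩ := Finset.exists_subset_card_eq hcase
        have hPS₁ : P ⊆ S₁ := hPsub.trans hX''S₁
        have hQS₂ : Q ⊆ S₂ := (hQsub.trans hYrsub).trans hY''S₂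
        obtain ⟨F, hiso, hcol, hind, hsub, hcard⟩ := assemble H hk G χ (↑A) true I hIcard hIind
          P Q (by rw [hIcard, hPcard]) (by rw [hIc, hQcard])
          (fun x hx hx' => hdisj12 x x (hPS₁ hx) (hQS₂ hx') rfl)
          (fun x hx y hy hxy =>
            ⟨hadj (mem_union_right _ (hQS₂ hx)) (mem_union_right _ (hQS₂ hy)) hxy,
             hS'red x ((hQsub.trans hYrsub).trans hY''sub hx)
               y ((hQsub.trans hYrsub).trans hY''sub hy) hxy⟩)
          (fun x hx y hy => by
            have hxy : x ≠ y := hdisj12 x y (hPS₁ hx) (hQS₂ hy)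
            refine ⟨hadj (mem_union_left _ (hPS₁ hx)) (mem_union_right _ (hQS₂ hy)) hxy, ?_⟩
            have := (mem_filter.mp (hQsub hy)).2 x (hPsub hx)
            rw [← hcsym] at this
            exact this)
          (fun x hx => hS₁A (hPS₁ hx))
        refine ⟨F, ⟨hiso, Or.inl ⟨hcol, hind⟩⟩, hsub.trans ?_, hcard⟩
        intro x hx
        simp only [Finset.coe_union, Set.mem_union] at hx ⊢
        rcases hx with hx | hx
        · exact Or.inl (hPS₁ hx)
        · exact Or.inr (hQS₂ hx)
      · -- blue copy: I ↦ P ⊆ Yb (⊆ Aᶜ), rest ↦ Q ⊆ X'' (blue clique in S₁)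
        have hYbcard : α ≤ Yb.card := by omega
        obtain ⟨P, hPsub, hPcard⟩ := Finset.exists_subset_card_eq hYbcard
        obtain ⟨Q, hQsub, hQcard⟩ :=
          Finset.exists_subset_card_eq (le_trans (Nat.sub_le k α) hX''card)
        have hPS₂ : P ⊆ S₂ := (hPsub.trans hYbsub).trans hY''S₂
        have hQS₁ : Q ⊆ S₁ := hQsub.trans hX''S₁
        obtain ⟨F, hiso, hcol, hind, hsub, hcard⟩ := assemble H hk G χ ((↑A : Set (Fin n))ᶜ)
          false I hIcard hIind P Q (by rw [hIcard, hPcard]) (by rw [hIc, hQcard])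
          (fun x hx hx' => hdisj12 x x (hQS₁ hx') (hPS₂ hx) rfl)
          (fun x hx y hy hxy =>
            ⟨hadj (mem_union_left _ (hQS₁ hx)) (mem_union_left _ (hQS₁ hy)) hxy,
             hSblue x (hX''sub (hQsub hx)) y (hX''sub (hQsub hy)) hxy⟩)
          (fun x hx y hy => by
            have hxy : x ≠ y := (hdisj12 y x (hQS₁ hy) (hPS₂ hx)).symm
            exact ⟨hadj (mem_union_right _ (hPS₂ hx)) (mem_union_left _ (hQS₁ hy)) hxy,
              hYbblue x (hPsub hx) y (hQsub hy)⟩)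
          (fun x hx => hS₂A x (hPS₂ hx))
        refine ⟨F, ⟨hiso, Or.inr ⟨hcol, hind⟩⟩, hsub.trans ?_, hcard⟩
        intro x hx
        simp only [Finset.coe_union, Set.mem_union] at hx ⊢
        rcases hx with hx | hx
        · exact Or.inr (hPS₂ hx)
        · exact Or.inl (hQS₁ hx)
    · -- blue K_k inside S₂ ⊆ Aᶜ : all-blue copy entirely in Aᶜ
      obtain ⟨P, hPsub, hPcard⟩ := Finset.exists_subset_card_eq (hS'card ▸ hαk : α ≤ S'.card)
      set Q := S' \ P with hQ
      have hQsub : Q ⊆ S' := sdiff_subset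
      have hQcard : Q.card = k - α := by rw [hQ, card_sdiff_of_subset hPsub, hS'card, hPcard]
      have hSin : S' ⊆ S₁ ∪ S₂ := hS'sub.trans subset_union_right
      obtain ⟨F, hiso, hcol, hind, hsub, hcard⟩ := assemble H hk G χ ((↑A : Set (Fin n))ᶜ)
        false I hIcard hIind P Q (by rw [hIcard, hPcard]) (by rw [hIc, hQcard])
        (fun x hx hx' => (mem_sdiff.mp hx').2 hx)
        (fun x hx y hy hxy => ⟨hadj (hSin (hQsub hx)) (hSin (hQsub hy)) hxy,
          hS'blue x (hQsub hx) y (hQsub hy) hxy⟩)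
        (fun x hx y hy => by
          have hxy : x ≠ y := fun h => (mem_sdiff.mp hy).2 (h ▸ hx)
          exact ⟨hadj (hSin (hPsub hx)) (hSin (hQsub hy)) hxy,
            hS'blue x (hPsub hx) y (hQsub hy) hxy⟩)
        (fun x hx => hS₂A x (hS'sub (hPsub hx)))
      refine ⟨F, ⟨hiso, Or.inr ⟨hcol, hind⟩⟩, hsub.trans ?_, hcard⟩
      intro x hx
      simp only [Finset.coe_union, Set.mem_union] at hx ⊢
      rcases hx with hx | hx
      · exact Or.inr (hS'sub (hPsub hx))
      · exact Or.inr (hS'sub (hQsub hx))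

lemma fiberBound {n : ℕ} (A B : Finset (Fin n)) (hAB : ∀ x ∈ B, x ∉ A) (M : ℕ)
    (V₀ : Finset (Fin n)) :
    (((A.powersetCard M) ×ˢ (B.powersetCard M)).filter
        (fun p => V₀ ⊆ p.1 ∪ p.2)).card ≤
      n.choose (M - (V₀ ∩ A).card) * n.choose (M - (V₀ \ A).card) := by
  classical
  set a := (V₀ ∩ A).card
  set b := (V₀ \ A).card
  have key : ∀ p ∈ ((A.powersetCard M) ×ˢ (B.powersetCard M)).filter
      (fun p => V₀ ⊆ p.1 ∪ p.2),
      p.1 ∩ V₀ = V₀ ∩ A ∧ p.2 ∩ V₀ = V₀ \ A ∧ p.1.card = M ∧ p.2.card = M ∧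
      p.1 ⊆ A ∧ p.2 ⊆ B := by
    intro p hp
    rw [mem_filter, mem_product, mem_powersetCard, mem_powersetCard] at hp
    obtain ⟨⟨⟨h1A, h1c⟩, h2B, h2c⟩, hV⟩ := hp
    refine ⟨?_, ?_, h1c, h2c, h1A, h2B⟩
    · ext x
      simp only [mem_inter, mem_sdiff]
      constructor
      · rintro ⟨hx1, hxV⟩
        exact ⟨hxV, h1A hx1⟩
      · rintro ⟨hxV, hxA⟩
        rcases mem_union.mp (hV hxV) with h | h
        · exact ⟨h, hxV⟩
        · exact absurd hxA (hAB x (h2B h))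
    · ext x
      simp only [mem_inter, mem_sdiff]
      constructor
      · rintro ⟨hx2, hxV⟩
        exact ⟨hxV, hAB x (h2B hx2)⟩
      · rintro ⟨hxV, hxA⟩
        rcases mem_union.mp (hV hxV) with h | h
        · exact absurd (h1A h) hxA
        · exact ⟨h, hxV⟩
  have := Finset.card_le_card_of_injOn
    (s := ((A.powersetCard M) ×ˢ (B.powersetCard M)).filter (fun p => V₀ ⊆ p.1 ∪ p.2))
    (f := fun p : Finset (Fin n) × Finset (Fin n) => (p.1 \ V₀, p.2 \ V₀))
    (t := ((Finset.univ : Finset (Fin n)).powersetCard (M - a)) ×ˢ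
          ((Finset.univ : Finset (Fin n)).powersetCard (M - b)))
    ?_ ?_
  · calc _ ≤ _ := this
      _ = n.choose (M - a) * n.choose (M - b) := by
        rw [card_product, card_powersetCard, card_powersetCard, card_univ, Fintype.card_fin]
  · intro p hp
    obtain ⟨h1V, h2V, h1c, h2c, -, -⟩ := key p hp
    rw [mem_coe, mem_product, mem_powersetCard, mem_powersetCard]
    have e1 : (p.1 \ V₀).card = M - a := by
      have := Finset.card_sdiff_add_card_inter p.1 V₀
      rw [h1V] at this
      omega
    have e2 : (p.2 \ V₀).card = M - b := by
      have := Finset.card_sdiff_add_card_inter p.2 V₀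
      rw [h2V] at this
      omega
    exact ⟨⟨subset_univ _, e1⟩, subset_univ _, e2⟩
  · intro p hp q hq hpq
    obtain ⟨hp1, hp2, -, -, hp1A, hp2B⟩ := key p hp
    obtain ⟨hq1, hq2, -, -, hq1A, hq2B⟩ := key q hq
    simp only [Prod.mk.injEq] at hpq
    have r1 : ∀ (r : Finset (Fin n) × Finset (Fin n)), r.1 ∩ V₀ = V₀ ∩ A →
        r.1 = (r.1 \ V₀) ∪ (V₀ ∩ A) := by
      intro r hr
      rw [← hr]
      ext x
      simp only [mem_union, mem_sdiff, mem_inter]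
      by_cases hxV : x ∈ V₀ <;> try tauto
    have r2 : ∀ (r : Finset (Fin n) × Finset (Fin n)), r.2 ∩ V₀ = V₀ \ A →
        r.2 = (r.2 \ V₀) ∪ (V₀ \ A) := by
      intro r hr
      rw [← hr]
      ext x
      simp only [mem_union, mem_sdiff, mem_inter]
      by_cases hxV : x ∈ V₀ <;> try tauto
    have : p.1 = q.1 := by rw [r1 p hp1, r1 q hq1, hpq.1]
    have h2 : p.2 = q.2 := by rw [r2 p hp2, r2 q hq2, hpq.2]
    exact Prod.ext this h2

instance subgraphFinite {n : ℕ} (G : SimpleGraph (Fin n)) : Finite (G.Subgraph) := by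
  classical
  apply Finite.of_injective (fun F : G.Subgraph => (F.verts, F.edgeSet))
  intro F₁ F₂ h
  simp only [Prod.mk.injEq] at h
  ext x y
  · rw [h.1]
  · rw [← SimpleGraph.Subgraph.mem_edgeSet, ← SimpleGraph.Subgraph.mem_edgeSet, h.2]

/-- Supersaturation for `(A,B)`-good copies of `H`: for every graph `H` on `k`
vertices there is `η > 0` such that for all sufficiently large `n`, every graph `G` on
`n` vertices with at least `(1-η)·C(n,2)` edges, every balanced partition `A ∪ Aᶜ` of the
vertex set, and every red(`true`)/blue(`false`) colouring of the edges, there are at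
least `η n^k` copies of `H` in `G` that are either entirely red with at least `α(H)`
vertices in `A`, or entirely blue with at least `α(H)` vertices in `Aᶜ`. -/
theorem stmt8 {W : Type*} [Fintype W] (H : SimpleGraph W) (k : ℕ)
    (hk : Fintype.card W = k) :
    ∃ η : ℝ, 0 < η ∧ ∃ n₀ : ℕ, ∀ n : ℕ, n₀ ≤ n →
      ∀ G : SimpleGraph (Fin n),
        (1 - η) * (n.choose 2 : ℝ) ≤ (G.edgeSet.ncard : ℝ) →
      ∀ A : Finset (Fin n), 2 * A.card = n →
      ∀ χ : Sym2 (Fin n) → Bool,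
        η * (n : ℝ) ^ k ≤
          (({F : G.Subgraph | Nonempty (H ≃g F.coe) ∧
            ((∀ e ∈ F.edgeSet, χ e = true) ∧ _root_.indepNum H ≤ (F.verts ∩ ↑A).ncard ∨
             (∀ e ∈ F.edgeSet, χ e = false) ∧
               _root_.indepNum H ≤ (F.verts ∩ (↑A : Set (Fin n))ᶜ).ncard)}).ncard : ℝ) := by
  classical
  obtain ⟨I, hIcard, hIind⟩ := exists_indepSet H
  set T := (k + 1) * 2 ^ (k + 1) with hT
  have hT1 : k * 2 ^ k ≤ T :=
    Nat.mul_le_mul (Nat.le_succ k) (Nat.pow_le_pow_right (by norm_num) (Nat.le_succ k))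
  have hT2 : k ≤ T := by
    calc k ≤ k + 1 := Nat.le_succ k
      _ ≤ (k + 1) * 2 ^ (k + 1) := Nat.le_mul_of_pos_right _ (by positivity)
  obtain ⟨R₁, hR₁⟩ := myRamsey k T
  obtain ⟨R₂, hR₂⟩ := myRamsey T k
  set M := max (max R₁ R₂) (k + 2) with hM
  have hMR₁ : R₁ ≤ M := le_trans (le_max_left _ _) (le_max_left _ _)
  have hMR₂ : R₂ ≤ M := le_trans (le_max_right _ _) (le_max_left _ _)
  have hMk : k + 2 ≤ M := le_max_right _ _
  set η : ℝ := 1 / (2 * 8 ^ (2 * M) * (M.factorial : ℝ) ^ 2) with hη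
  have hfacpos : (0:ℝ) < (M.factorial : ℝ) := by positivity
  have hηpos : 0 < η := by rw [hη]; positivity
  refine ⟨η, hηpos, 16 * M + 16, ?_⟩
  intro n hn G hG A hA χ
  have hnpos : 0 < n := by omega
  have hnR : (0:ℝ) < n := by positivity
  set B := Aᶜ with hB
  have hBA : ∀ x ∈ B, x ∉ A := fun x hx => Finset.mem_compl.mp hx
  have hBcard : B.card = A.card := by
    rw [hB, Finset.card_compl, Fintype.card_fin]; omega
  have hMA : M ≤ A.card := by omega
  set Pairs := (A.powersetCard M) ×ˢ (B.powersetCard M) with hPairs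
  set Cpred : Finset (Fin n) × Finset (Fin n) → Prop :=
    fun p => ∀ x ∈ p.1 ∪ p.2, ∀ y ∈ p.1 ∪ p.2, x ≠ y → G.Adj x y with hCpred
  set Good := Pairs.filter Cpred with hGood
  set Bad := Pairs.filter (fun p => ¬ Cpred p) with hBad
  have hGB : Good.card + Bad.card = Pairs.card :=
    Finset.card_filter_add_card_filter_not _
  -- non-edges
  set NE := (⊤ : SimpleGraph (Fin n)).edgeFinset \ G.edgeFinset with hNE
  have hNEcard : NE.card + G.edgeFinset.card = n.choose 2 := by
    rw [hNE, Finset.card_sdiff_add_card_eq_card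
      (SimpleGraph.edgeFinset_mono le_top), SimpleGraph.card_edgeFinset_top_eq_card_choose_two,
      Fintype.card_fin]
  -- each bad pair contains a non-edge
  have hBadsub : Bad ⊆ NE.biUnion (fun e => Pairs.filter (fun p => ∀ v ∈ e, v ∈ p.1 ∪ p.2)) := by
    intro p hp
    rw [hBad, Finset.mem_filter] at hp
    obtain ⟨hpP, hpc⟩ := hp
    have hpc' : ¬ (∀ x ∈ p.1 ∪ p.2, ∀ y ∈ p.1 ∪ p.2, x ≠ y → G.Adj x y) := hpc
    push_neg at hpc'
    clear hpc
    rename' hpc' => hpc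
    obtain ⟨x, hx, y, hy, hxy, hnadj⟩ := hpc
    rw [Finset.mem_biUnion]
    refine ⟨s(x, y), ?_, ?_⟩
    · rw [hNE, Finset.mem_sdiff, SimpleGraph.mem_edgeFinset, SimpleGraph.mem_edgeFinset,
        SimpleGraph.mem_edgeSet, SimpleGraph.mem_edgeSet, SimpleGraph.top_adj]
      exact ⟨hxy, hnadj⟩
    · rw [Finset.mem_filter]
      refine ⟨hpP, ?_⟩
      intro v hv
      rcases Sym2.mem_iff.mp hv with rfl | rfl
      · exact hx
      · exact hy
  have hfiber2 : ∀ e ∈ NE, (Pairs.filter (fun p => ∀ v ∈ e, v ∈ p.1 ∪ p.2)).card ≤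
      n ^ (2 * M - 2) := by
    intro e he
    induction e with
    | h x y =>
      have hxy : x ≠ y := by
        rw [hNE, Finset.mem_sdiff, SimpleGraph.mem_edgeFinset, SimpleGraph.mem_edgeSet,
          SimpleGraph.top_adj] at he
        exact he.1
      have heq : Pairs.filter (fun p => ∀ v ∈ s(x, y), v ∈ p.1 ∪ p.2) =
          Pairs.filter (fun p => ({x, y} : Finset (Fin n)) ⊆ p.1 ∪ p.2) := by
        apply Finset.filter_congr
        intro p _
        constructor
        · intro h v hv
          rcases Finset.mem_insert.mp hv with rfl | hv
          · exact h v (Sym2.mem_mk_left _ _)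
          · rw [Finset.mem_singleton] at hv
            subst hv
            exact h v (Sym2.mem_mk_right _ _)
        · intro h v hv
          rcases Sym2.mem_iff.mp hv with rfl | rfl
          · exact h (Finset.mem_insert_self _ _)
          · exact h (Finset.mem_insert_of_mem (Finset.mem_singleton_self _))
      rw [heq]
      set V₀ : Finset (Fin n) := {x, y} with hV₀
      have hV₀card : V₀.card = 2 := Finset.card_pair hxy
      have habsum : (V₀ ∩ A).card + (V₀ \ A).card = 2 := by
        rw [Finset.card_inter_add_card_sdiff, hV₀card]
      calc (Pairs.filter (fun p => V₀ ⊆ p.1 ∪ p.2)).card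
          ≤ n.choose (M - (V₀ ∩ A).card) * n.choose (M - (V₀ \ A).card) :=
            fiberBound A B hBA M V₀
        _ ≤ n ^ (M - (V₀ ∩ A).card) * n ^ (M - (V₀ \ A).card) :=
            Nat.mul_le_mul (Nat.choose_le_pow _ _) (Nat.choose_le_pow _ _)
        _ = n ^ (2 * M - 2) := by
            rw [← pow_add]
            congr 1
            omega
  have hBadcard : Bad.card ≤ NE.card * n ^ (2 * M - 2) := by
    calc Bad.card ≤ (NE.biUnion (fun e => Pairs.filter (fun p => ∀ v ∈ e, v ∈ p.1 ∪ p.2))).card :=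
          Finset.card_le_card hBadsub
      _ ≤ ∑ e ∈ NE, (Pairs.filter (fun p => ∀ v ∈ e, v ∈ p.1 ∪ p.2)).card :=
          Finset.card_biUnion_le
      _ ≤ NE.card * n ^ (2 * M - 2) := by
          have := Finset.sum_le_card_nsmul NE
            (fun e => (Pairs.filter (fun p => ∀ v ∈ e, v ∈ p.1 ∪ p.2)).card)
            (n ^ (2 * M - 2)) (fun e he => hfiber2 e he)
          simpa [smul_eq_mul] using this
  -- apply onecopy to every good pair
  have honecopy : ∀ p ∈ Good, ∃ F : G.Subgraph,
      (Nonempty (H ≃g F.coe) ∧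
        ((∀ e ∈ F.edgeSet, χ e = true) ∧ _root_.indepNum H ≤ (F.verts ∩ ↑A).ncard ∨
         (∀ e ∈ F.edgeSet, χ e = false) ∧
           _root_.indepNum H ≤ (F.verts ∩ (↑A : Set (Fin n))ᶜ).ncard)) ∧
      F.verts ⊆ ↑(p.1 ∪ p.2) ∧ F.verts.ncard = k := by
    intro p hp
    rw [hGood, Finset.mem_filter] at hp
    obtain ⟨hpP, hpc⟩ := hp
    rw [hPairs, Finset.mem_product, Finset.mem_powersetCard, Finset.mem_powersetCard] at hpP
    obtain ⟨⟨h1A, h1c⟩, h2B, h2c⟩ := hpP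
    have hpc' : ∀ x ∈ p.1 ∪ p.2, ∀ y ∈ p.1 ∪ p.2, x ≠ y → G.Adj x y := hpc
    exact onecopy H hk G χ A I hIcard hIind T R₁ R₂ hT1 hT2
      (fun V c hc hcard => hR₁ V c hc hcard) (fun V c hc hcard => hR₂ V c hc hcard)
      p.1 p.2 h1A (fun x hx => hBA x (h2B hx)) (by omega) (by omega) hpc'
  set Φ : Finset (Fin n) × Finset (Fin n) → G.Subgraph :=
    fun p => if h : p ∈ Good then (honecopy p h).choose else ⊥ with hΦ
  set Img := Good.image Φ with hImg
  have hΦspec : ∀ p ∈ Good,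
      (Nonempty (H ≃g (Φ p).coe) ∧
        ((∀ e ∈ (Φ p).edgeSet, χ e = true) ∧ _root_.indepNum H ≤ ((Φ p).verts ∩ ↑A).ncard ∨
         (∀ e ∈ (Φ p).edgeSet, χ e = false) ∧
           _root_.indepNum H ≤ ((Φ p).verts ∩ (↑A : Set (Fin n))ᶜ).ncard)) ∧
      (Φ p).verts ⊆ ↑(p.1 ∪ p.2) ∧ (Φ p).verts.ncard = k := by
    intro p h
    have hΦeq : Φ p = (honecopy p h).choose := by simp only [hΦ]; exact dif_pos h
    rw [hΦeq]
    exact (honecopy p h).choose_spec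
  have hfiberk : ∀ F ∈ Img, (Good.filter (fun p => Φ p = F)).card ≤ n ^ (2 * M - k) := by
    intro F hF
    obtain ⟨p₀, hp₀, hΦp₀⟩ := Finset.mem_image.mp hF
    have hFk : F.verts.ncard = k := hΦp₀ ▸ (hΦspec p₀ hp₀).2.2
    set V₀ := (Set.toFinite F.verts).toFinset with hV₀
    have hV₀card : V₀.card = k := by
      rw [hV₀, ← Set.ncard_eq_toFinset_card F.verts (Set.toFinite F.verts), hFk]
    have hsub : Good.filter (fun p => Φ p = F) ⊆ Pairs.filter (fun p => V₀ ⊆ p.1 ∪ p.2) := by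
      intro p hp
      rw [Finset.mem_filter] at hp ⊢
      obtain ⟨hpG, hpF⟩ := hp
      refine ⟨Finset.mem_of_mem_filter _ hpG, ?_⟩
      intro v hv
      have hv' : v ∈ F.verts := (Set.Finite.mem_toFinset _).mp hv
      have := (hΦspec p hpG).2.1
      rw [hpF] at this
      exact this hv'
    have habsum : (V₀ ∩ A).card + (V₀ \ A).card = k := by
      rw [Finset.card_inter_add_card_sdiff, hV₀card]
    calc (Good.filter (fun p => Φ p = F)).card
        ≤ (Pairs.filter (fun p => V₀ ⊆ p.1 ∪ p.2)).card := Finset.card_le_card hsub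
      _ ≤ n.choose (M - (V₀ ∩ A).card) * n.choose (M - (V₀ \ A).card) := fiberBound A B hBA M V₀
      _ ≤ n ^ (M - (V₀ ∩ A).card) * n ^ (M - (V₀ \ A).card) :=
          Nat.mul_le_mul (Nat.choose_le_pow _ _) (Nat.choose_le_pow _ _)
      _ = n ^ (2 * M - k) := by rw [← pow_add]; congr 1; omega
  have hGoodImg : Good.card ≤ n ^ (2 * M - k) * Img.card :=
    Finset.card_le_mul_card_image Good _ hfiberk
  -- the image consists of good copies
  set GS := {F : G.Subgraph | Nonempty (H ≃g F.coe) ∧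
      ((∀ e ∈ F.edgeSet, χ e = true) ∧ _root_.indepNum H ≤ (F.verts ∩ ↑A).ncard ∨
       (∀ e ∈ F.edgeSet, χ e = false) ∧
         _root_.indepNum H ≤ (F.verts ∩ (↑A : Set (Fin n))ᶜ).ncard)} with hGS
  have hImgGS : (↑Img : Set G.Subgraph) ⊆ GS := by
    intro F hF
    rw [Finset.mem_coe] at hF
    obtain ⟨p, hp, hΦp⟩ := Finset.mem_image.mp hF
    rw [hGS, Set.mem_setOf_eq]
    exact hΦp ▸ (hΦspec p hp).1
  have hImgcard : (Img.card : ℝ) ≤ (GS.ncard : ℝ) := by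
    have : Img.card = (↑Img : Set G.Subgraph).ncard := (Set.ncard_coe_finset Img).symm
    rw [this]
    exact_mod_cast Nat.cast_le.mpr (Set.ncard_le_ncard hImgGS (Set.toFinite GS))
  -- numeric estimates
  have hAcardR : (A.card : ℝ) = (n : ℝ) / 2 := by
    have : (2 * (A.card : ℝ)) = (n : ℝ) := by exact_mod_cast hA
    linarith
  have hPairscard : Pairs.card = A.card.choose M * A.card.choose M := by
    rw [hPairs, Finset.card_product, Finset.card_powersetCard, Finset.card_powersetCard, hBcard]
  have hchoose_lb : ((n : ℝ) / 8) ^ M / (M.factorial : ℝ) ≤ (A.card.choose M : ℝ) := by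
    have h1 := Nat.pow_le_choose (α := ℝ) M A.card
    have hbase : (n : ℝ) / 8 ≤ ((A.card + 1 - M : ℕ) : ℝ) := by
      have hMle : M ≤ A.card + 1 := by omega
      rw [Nat.cast_sub hMle]
      push_cast
      rw [hAcardR]
      have : (16 * M + 16 : ℝ) ≤ (n : ℝ) := by exact_mod_cast Nat.cast_le.mpr hn
      linarith
    calc ((n : ℝ) / 8) ^ M / (M.factorial : ℝ)
        ≤ (((A.card + 1 - M : ℕ) : ℝ)) ^ M / (M.factorial : ℝ) := by
          gcongr
      _ ≤ (A.card.choose M : ℝ) := h1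
  have hPairs_lb : 2 * η * (n : ℝ) ^ (2 * M) ≤ (Pairs.card : ℝ) := by
    have hcnn : (0:ℝ) ≤ ((n:ℝ)/8)^M / (M.factorial : ℝ) := by positivity
    have h2 := mul_le_mul hchoose_lb hchoose_lb hcnn (Nat.cast_nonneg _)
    have heq : ((n:ℝ)/8)^M / (M.factorial:ℝ) * (((n:ℝ)/8)^M / (M.factorial:ℝ))
        = 2 * η * (n:ℝ)^(2*M) := by
      rw [hη, div_mul_div_comm, ← pow_add, div_pow]
      have h2M : M + M = 2*M := (two_mul M).symm
      rw [h2M]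
      have h8 : ((8:ℝ))^(2*M) ≠ 0 := by positivity
      have hf : ((M.factorial : ℝ)) ≠ 0 := by positivity
      field_simp
    have hc : (Pairs.card : ℝ) = (A.card.choose M : ℝ) * (A.card.choose M : ℝ) := by
      rw [hPairscard]; push_cast; ring
    rw [hc, ← heq]
    exact h2
  have hedge : (G.edgeSet.ncard : ℝ) = (G.edgeFinset.card : ℝ) := by
    congr 1
    rw [SimpleGraph.edgeFinset, Set.ncard_eq_toFinset_card']
  have hNE_ub : (NE.card : ℝ) ≤ η * (n:ℝ)^2 := by
    have h1 : (NE.card : ℝ) + (G.edgeFinset.card : ℝ) = (n.choose 2 : ℝ) := by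
      exact_mod_cast hNEcard
    have h2 : (n.choose 2 : ℝ) ≤ (n:ℝ)^2 := by exact_mod_cast Nat.choose_le_pow n 2
    have h3 : (0:ℝ) ≤ (n.choose 2 : ℝ) := Nat.cast_nonneg _
    rw [hedge] at hG
    nlinarith [hηpos.le]
  have hBadR : (Bad.card : ℝ) ≤ η * (n:ℝ)^(2*M) := by
    have h1 : (Bad.card : ℝ) ≤ (NE.card : ℝ) * (n:ℝ)^(2*M-2) := by exact_mod_cast hBadcard
    have h2 : (NE.card:ℝ) * (n:ℝ)^(2*M-2) ≤ η * (n:ℝ)^2 * (n:ℝ)^(2*M-2) :=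
      mul_le_mul_of_nonneg_right hNE_ub (by positivity)
    have h3 : (n:ℝ)^2 * (n:ℝ)^(2*M-2) = (n:ℝ)^(2*M) := by rw [← pow_add]; congr 1; omega
    calc (Bad.card : ℝ) ≤ (NE.card : ℝ) * (n:ℝ)^(2*M-2) := h1
      _ ≤ η * (n:ℝ)^2 * (n:ℝ)^(2*M-2) := h2
      _ = η * (n:ℝ)^(2*M) := by rw [mul_assoc, h3]
  have hGoodR : η * (n:ℝ)^(2*M) ≤ (Good.card : ℝ) := by
    have h1 : (Good.card : ℝ) + (Bad.card : ℝ) = (Pairs.card : ℝ) := by exact_mod_cast hGB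
    linarith
  have hGoodImgR : (Good.card : ℝ) ≤ (n:ℝ)^(2*M-k) * (Img.card : ℝ) := by
    exact_mod_cast hGoodImg
  have hkM : (n:ℝ)^(2*M) = (n:ℝ)^(2*M-k) * (n:ℝ)^k := by
    rw [← pow_add]; congr 1; omega
  have hfinal : η * (n:ℝ)^k ≤ (Img.card : ℝ) := by
    have hpow : (0:ℝ) < (n:ℝ)^(2*M-k) := by positivity
    rw [hkM] at hGoodR
    have h5 : η * (n:ℝ)^k * (n:ℝ)^(2*M-k) ≤ (Img.card:ℝ) * (n:ℝ)^(2*M-k) := by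
      calc η * (n:ℝ)^k * (n:ℝ)^(2*M-k) = η * ((n:ℝ)^(2*M-k) * (n:ℝ)^k) := by ring
        _ ≤ (Good.card : ℝ) := hGoodR
        _ ≤ (n:ℝ)^(2*M-k) * (Img.card : ℝ) := hGoodImgR
        _ = (Img.card:ℝ) * (n:ℝ)^(2*M-k) := by ring
    exact le_of_mul_le_mul_right h5 hpow
  exact hfinal.trans hImgcard
end

section
/- Let H be a graph on k ≥ 3 vertices with independence number α, let s be a positive integer divisible by 2k, and let 0 < η < 1. Suppose G is a 2-edge-coloured graph that is (H, η²s)-rich, and X, Y ⊂ V(G) are disjoint s-sets such that G[X] contains a blue H-tiling with s/k copies of H and G[Y] contains a red H-tiling with s/k copies of H. Then there exists T ⊆ X ∪ Y such that G[T] is an (H,η)-cluster. -/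
open SimpleGraph

noncomputable def m2 {V : Type*} [Fintype V] (H : SimpleGraph V) : ℝ :=
  if 2 ≤ H.edgeSet.ncard then
    sSup {x : ℝ | ∃ F : H.Subgraph, 3 ≤ F.verts.ncard ∧
      x = ((F.edgeSet.ncard : ℝ) - 1) / ((F.verts.ncard : ℝ) - 2)}
  else 1 / 2

def IsCopy {W V : Type*} (H : SimpleGraph W) (G : SimpleGraph V) (f : W → V) : Prop :=
  Function.Injective f ∧ ∀ ⦃a b⦄, H.Adj a b → G.Adj (f a) (f b)

def IsMonoCopy {W V : Type*} (H : SimpleGraph W) (G : SimpleGraph V)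
    (χ : Sym2 V → Bool) (col : Bool) (f : W → V) : Prop :=
  IsCopy H G f ∧ ∀ ⦃a b⦄, H.Adj a b → χ s(f a, f b) = col

def MonoTilingOn {W V : Type*} (H : SimpleGraph W) (G : SimpleGraph V)
    (χ : Sym2 V → Bool) (col : Bool) (T : Set V) (m : ℕ) : Prop :=
  ∃ f : Fin m → W → V, (∀ i, IsMonoCopy H G χ col (f i)) ∧
    (∀ i a, f i a ∈ T) ∧
    ∀ i j, i ≠ j → Disjoint (Set.range (f i)) (Set.range (f j))

def IsRich {W V : Type*} [Fintype W] [DecidableEq V] (H : SimpleGraph W)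
    (G : SimpleGraph V) (s' : ℕ) : Prop :=
  ∀ χ : Sym2 V → Bool, ∀ X Y : Finset V, Disjoint X Y → X.card = s' → Y.card = s' →
    (∃ f : W → V, IsMonoCopy H G χ true f ∧ (∀ a, f a ∈ X ∪ Y) ∧
      _root_.indepNum H ≤ (Set.range f ∩ ↑X).ncard) ∨
    (∃ f : W → V, IsMonoCopy H G χ false f ∧ (∀ a, f a ∈ X ∪ Y) ∧
      _root_.indepNum H ≤ (Set.range f ∩ ↑Y).ncard)

def IsCluster {W V : Type*} [Fintype W] (H : SimpleGraph W) (G : SimpleGraph V)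
    (χ : Sym2 V → Bool) (k α : ℕ) (η : ℝ) (T : Set V) : Prop :=
  T.Nonempty ∧
  ∃ mr mb : ℕ, MonoTilingOn H G χ true T mr ∧ MonoTilingOn H G χ false T mb ∧
    (T.ncard : ℝ) / (2 * k - α) - η * T.ncard ≤ mr ∧
    (T.ncard : ℝ) / (2 * k - α) - η * T.ncard ≤ mb

namespace Stmt11Aux

variable {W V : Type*} [Fintype W] [DecidableEq V]

/-- the range of a copy, as a Finset -/
def rng (f : W → V) : Finset V := Finset.image f Finset.univ

lemma coe_rng (f : W → V) : ((rng f : Finset V) : Set V) = Set.range f := by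
  simp [rng]

lemma mem_rng {f : W → V} (a : W) : f a ∈ rng f := by
  simp [rng]

lemma card_rng {f : W → V} (hf : Function.Injective f) :
    (rng f).card = Fintype.card W := by
  simp [rng, Finset.card_image_of_injective _ hf]

lemma disjoint_rng_iff {f g : W → V} :
    Disjoint (rng f) (rng g) ↔ Disjoint (Set.range f) (Set.range g) := by
  rw [← coe_rng, ← coe_rng, Finset.disjoint_coe]

lemma tiling_mono {H : SimpleGraph W} {G : SimpleGraph V} {χ : Sym2 V → Bool} {c : Bool}
    {T T' : Set V} {m : ℕ} (h : MonoTilingOn H G χ c T m) (hT : T ⊆ T') :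
    MonoTilingOn H G χ c T' m := by
  obtain ⟨f, h1, h2, h3⟩ := h
  exact ⟨f, h1, fun i a => hT (h2 i a), h3⟩

lemma pad {M : ℕ} (PX : Finset (Fin M)) (k S s' : ℕ) (hk : 0 < k)
    (hup : k * PX.card ≤ S + s' + k) (hsup : S + s' + k ≤ k * M) :
    ∃ PX' : Finset (Fin M), PX ⊆ PX' ∧ S + s' ≤ k * PX'.card ∧
      k * PX'.card ≤ S + s' + k := by
  set q := (S + s') / k + 1 with hq
  have hkq : k * q = k * ((S + s') / k) + k := by rw [hq]; ring
  have hdm := Nat.div_add_mod (S + s') k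
  have hmlt := Nat.mod_lt (S + s') hk
  have hq1 : S + s' < k * q := by omega
  have hq2 : k * q ≤ S + s' + k := by omega
  have hPXM : PX.card ≤ M := Nat.le_of_mul_le_mul_left (le_trans hup hsup) hk
  have hqM : q ≤ M := Nat.le_of_mul_le_mul_left (le_trans hq2 hsup) hk
  have hmM : max PX.card q ≤ Fintype.card (Fin M) := by
    rw [Fintype.card_fin]; exact max_le hPXM hqM
  obtain ⟨PX', hsub, hcard⟩ := Finset.exists_superset_card_eq (le_max_left PX.card q) hmM
  refine ⟨PX', hsub, ?_, ?_⟩ <;> rw [hcard] <;>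
    rcases max_cases PX.card q with ⟨h, h'⟩ | ⟨h, h'⟩ <;> rw [h]
  · have := Nat.mul_le_mul_left k h'
    omega
  · omega
  · exact hup
  · exact hq2

set_option maxHeartbeats 1000000 in
lemma extract (H : SimpleGraph W) (G : SimpleGraph V) (χ : Sym2 V → Bool)
    (k α s' t M : ℕ) (η : ℝ) (d : Bool)
    (hkW : Fintype.card W = k) (hk1 : 1 ≤ k) (hαk : α ≤ k) (ht1 : 1 ≤ t)
    (hη : 0 < η)
    (hnum : (s' : ℝ) + k ≤ η * t * (k * k))
    (P Q : Finset V)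
    (O : Fin M → W → V)
    (hO : ∀ p, IsMonoCopy H G χ d (O p))
    (hOP : ∀ p a, O p a ∈ P)
    (hOdisj : ∀ p q : Fin M, p ≠ q → Disjoint (Set.range (O p)) (Set.range (O q)))
    (g : Fin t → W → V)
    (hg : ∀ i, IsMonoCopy H G χ (!d) (g i))
    (hgPQ : ∀ i, rng (g i) ⊆ P ∪ Q)
    (hgP : ∀ i, α ≤ ((rng (g i)) ∩ P).card)
    (hgdisj : ∀ i j : Fin t, i ≠ j → Disjoint (rng (g i)) (rng (g j)))
    (PX : Finset (Fin M))
    (hsub : ∀ i, rng (g i) ∩ P ⊆ PX.biUnion fun p => rng (O p))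
    (hcount : k * PX.card ≤ (∑ i, ((rng (g i)) ∩ P).card) + ((t - 1) * (k - α) + s' + k))
    (htM : t ≤ M) :
    ∃ T : Set V, T ⊆ ↑P ∪ ↑Q ∧ T.Nonempty ∧
      ∃ a : ℕ, MonoTilingOn H G χ (!d) T t ∧ MonoTilingOn H G χ d T a ∧
        (T.ncard : ℝ) / (2 * k - α) - η * T.ncard ≤ t ∧
        (T.ncard : ℝ) / (2 * k - α) - η * T.ncard ≤ a := by
  classical
  have hW : Nonempty W := by
    rw [← Fintype.card_pos_iff, hkW]; omega
  set C := ∑ i, ((rng (g i)) ∩ P).card with hC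
  set a := max PX.card t with ha
  have hta : t ≤ a := le_max_right _ _
  have haM : a ≤ Fintype.card (Fin M) := by
    rw [Fintype.card_fin]
    exact max_le (by simpa using PX.card_le_univ) htM
  obtain ⟨P', hPP', hP'card⟩ := Finset.exists_superset_card_eq (le_max_left PX.card t) haM
  set A : Finset V := P'.biUnion (fun p => rng (O p)) with hA
  set B : Finset V := Finset.univ.biUnion (fun i => rng (g i)) with hB
  have hOdisjF : ∀ p ∈ P', ∀ q ∈ P', p ≠ q → Disjoint (rng (O p)) (rng (O q)) :=
    fun p _ q _ hpq => disjoint_rng_iff.mpr (hOdisj p q hpq)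
  have hAcard : A.card = a * k := by
    rw [hA, Finset.card_biUnion hOdisjF]
    rw [Finset.sum_congr rfl (fun p _ => card_rng (hO p).1.1)]
    simp [hP'card, hkW, ha]
  have hBcard : B.card = t * k := by
    rw [hB, Finset.card_biUnion (fun i _ j _ hij => hgdisj i j hij)]
    rw [Finset.sum_congr rfl (fun i _ => card_rng (hg i).1.1)]
    simp [hkW, mul_comm]
  have hAP : A ⊆ P := by
    rw [hA]
    intro x hx
    obtain ⟨p, _, hx⟩ := Finset.mem_biUnion.mp hx
    obtain ⟨w, _, rfl⟩ := Finset.mem_image.mp hx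
    exact hOP p w
  have hgA : ∀ i, rng (g i) ∩ A = rng (g i) ∩ P := by
    intro i
    apply Finset.Subset.antisymm
    · exact Finset.inter_subset_inter (le_refl _) hAP
    · intro x hx
      have h1 := hsub i hx
      have h2 : PX.biUnion (fun p => rng (O p)) ⊆ A := by
        rw [hA]; exact Finset.biUnion_subset_biUnion_of_subset_left _ hPP'
      exact Finset.mem_inter.mpr ⟨(Finset.mem_inter.mp hx).1, h2 h1⟩
  have hABinter : (A ∩ B).card = C := by
    have hABeq : A ∩ B = Finset.univ.biUnion (fun i => rng (g i) ∩ A) := by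
      ext x
      simp only [Finset.mem_inter, hB, Finset.mem_biUnion, Finset.mem_univ, true_and]
      tauto
    rw [hABeq, Finset.card_biUnion]
    · exact Finset.sum_congr rfl (fun i _ => by rw [hgA i])
    · intro i _ j _ hij
      exact Finset.disjoint_of_subset_left Finset.inter_subset_left
        (Finset.disjoint_of_subset_right Finset.inter_subset_left (hgdisj i j hij))
  set N := (A ∪ B).card with hN
  have hNC : N + C = a * k + t * k := by
    rw [hN, ← hAcard, ← hBcard, ← hABinter]
    exact Finset.card_union_add_card_inter A B
  have hNtk : t * k ≤ N := by
    rw [hN, ← hBcard]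
    exact Finset.card_le_card Finset.subset_union_right
  have hC1 : t * α ≤ C := by
    rw [hC]
    calc t * α = ∑ _i : Fin t, α := by simp [mul_comm]
    _ ≤ _ := Finset.sum_le_sum (fun i _ => hgP i)
  have hC2 : C ≤ t * k := by
    rw [hC]
    calc ∑ i, ((rng (g i)) ∩ P).card ≤ ∑ _i : Fin t, k :=
        Finset.sum_le_sum (fun i _ => by
          rw [← hkW, ← card_rng (hg i).1.1]
          exact Finset.card_le_card Finset.inter_subset_left)
    _ = t * k := by simp [mul_comm]
  -- the cluster
  refine ⟨((A ∪ B : Finset V) : Set V), ?_, ?_, a, ?_, ?_, ?_, ?_⟩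
  · intro x hx
    rcases Finset.mem_union.mp hx with h | h
    · exact Set.mem_union_left _ (hAP h)
    · rcases Finset.mem_union.mp (hgPQ _ ((Finset.mem_biUnion.mp h).choose_spec.2)) with h' | h'
      · exact Set.mem_union_left _ h'
      · exact Set.mem_union_right _ h'
  · refine ⟨g ⟨0, ht1⟩ (Classical.arbitrary W), ?_⟩
    have : g ⟨0, ht1⟩ (Classical.arbitrary W) ∈ B :=
      Finset.mem_biUnion.mpr ⟨⟨0, ht1⟩, Finset.mem_univ _, mem_rng _⟩
    exact Finset.mem_coe.mpr (Finset.mem_union_right _ this)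
  · -- tiling by g, colour !d
    refine ⟨g, hg, ?_, ?_⟩
    · intro i w
      have : g i w ∈ B := Finset.mem_biUnion.mpr ⟨i, Finset.mem_univ _, mem_rng _⟩
      exact Finset.mem_coe.mpr (Finset.mem_union_right _ this)
    · intro i j hij
      rw [← coe_rng, ← coe_rng, Finset.disjoint_coe]
      exact hgdisj i j hij
  · -- tiling by O over P', colour d
    have hP'a : P'.card = a := hP'card
    set ι : Fin a → Fin M := fun j => ((P'.equivFin.symm (Fin.cast hP'a.symm j)) : Fin M) with hι
    have hιmem : ∀ j, ι j ∈ P' := fun j => (P'.equivFin.symm (Fin.cast hP'a.symm j)).2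
    have hιinj : Function.Injective ι := by
      intro i j hij
      have h1 : P'.equivFin.symm (Fin.cast hP'a.symm i) = P'.equivFin.symm (Fin.cast hP'a.symm j) :=
        Subtype.ext hij
      have h2 := P'.equivFin.symm.injective h1
      exact Fin.cast_injective _ h2
    refine ⟨fun j => O (ι j), fun j => hO (ι j), ?_, ?_⟩
    · intro j w
      have : O (ι j) w ∈ A :=
        Finset.mem_biUnion.mpr ⟨ι j, hιmem j, mem_rng _⟩
      exact Finset.mem_coe.mpr (Finset.mem_union_left _ this)
    · intro i j hij
      exact hOdisj _ _ (fun h => hij (hιinj h))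
  all_goals {
    rw [Set.ncard_coe_finset, ← hN]
    have hD : (0 : ℝ) < 2 * k - α := by
      have : (α : ℝ) ≤ k := by exact_mod_cast hαk
      have : (1 : ℝ) ≤ k := by exact_mod_cast hk1
      linarith
    rw [sub_le_iff_le_add, div_le_iff₀ hD]
    have hNR : (N : ℝ) + C = a * k + t * k := by exact_mod_cast hNC
    have hC1R : (t : ℝ) * α ≤ C := by exact_mod_cast hC1
    have hC2R : (C : ℝ) ≤ t * k := by exact_mod_cast hC2
    have hNtkR : (t : ℝ) * k ≤ N := by exact_mod_cast hNtk
    have htaR : (t : ℝ) ≤ a := by exact_mod_cast hta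
    have hαkR : (α : ℝ) ≤ k := by exact_mod_cast hαk
    have ht1R : (1 : ℝ) ≤ t := by exact_mod_cast ht1
    have hk1R : (1 : ℝ) ≤ k := by exact_mod_cast hk1
    have hcountR : (k : ℝ) * a ≤ C + ((t - 1) * (k - α) + s' + k) ∨ (a : ℝ) = t := by
      rcases max_cases PX.card t with ⟨h, h'⟩ | ⟨h, h'⟩
      · left
        have : (k : ℝ) * PX.card ≤ C + ((t:ℝ) - 1) * ((k:ℝ) - α) + s' + k := by
          have := hcount
          have hcast : ((k * PX.card : ℕ) : ℝ) ≤ ((C + ((t - 1) * (k - α) + s' + k) : ℕ) : ℝ) := by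
            exact_mod_cast this
          push_cast [Nat.cast_sub ht1, Nat.cast_sub hαk] at hcast
          linarith
        rw [ha, h]
        linarith
      · right; rw [ha, h]
    have hcushion : η * (t * k) * k ≤ η * N * (2 * k - α) := by
      have h1 : (t : ℝ) * k ≤ N := hNtkR
      have h2 : (k : ℝ) ≤ 2 * k - α := by linarith
      have h3 : (0:ℝ) ≤ t * k := by positivity
      nlinarith [mul_le_mul h1 h2 (by linarith) (le_trans h3 h1)]
    have hcush2 : (s':ℝ) + k ≤ η * N * (2 * k - α) := by
      refine le_trans ?_ hcushion
      calc (s':ℝ) + k ≤ η * t * (k * k) := hnum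
      _ = η * (t * k) * k := by ring
    rcases hcountR with hcr | hcr
    · nlinarith [mul_nonneg (mul_nonneg hη.le (Nat.cast_nonneg N)) (le_of_lt hD),
        mul_le_mul_of_nonneg_left htaR (by linarith : (0:ℝ) ≤ (k:ℝ) - α)]
    · nlinarith [mul_nonneg (mul_nonneg hη.le (Nat.cast_nonneg N)) (le_of_lt hD),
        mul_le_mul_of_nonneg_left htaR (by linarith : (0:ℝ) ≤ (k:ℝ) - α)]
  }

variable (H : SimpleGraph W) (G : SimpleGraph V) (χ : Sym2 V → Bool)

def Good (X Y : Finset V) {M : ℕ} (BX RY : Fin M → W → V) (s' α k : ℕ) (r b : ℕ) : Prop :=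
  ∃ (fr : Fin r → W → V) (fb : Fin b → W → V) (PX PY : Finset (Fin M)),
    (∀ i, IsMonoCopy H G χ true (fr i)) ∧
    (∀ i, IsMonoCopy H G χ false (fb i)) ∧
    (∀ i, rng (fr i) ⊆ X ∪ Y) ∧
    (∀ i, rng (fb i) ⊆ X ∪ Y) ∧
    (∀ i, α ≤ (rng (fr i) ∩ X).card) ∧
    (∀ i, α ≤ (rng (fb i) ∩ Y).card) ∧
    (∀ i, rng (fr i) ∩ X ⊆ PX.biUnion fun p => rng (BX p)) ∧
    (∀ i, rng (fb i) ∩ X ⊆ PX.biUnion fun p => rng (BX p)) ∧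
    (∀ i, rng (fr i) ∩ Y ⊆ PY.biUnion fun p => rng (RY p)) ∧
    (∀ i, rng (fb i) ∩ Y ⊆ PY.biUnion fun p => rng (RY p)) ∧
    (∀ i j, i ≠ j → Disjoint (rng (fr i)) (rng (fr j))) ∧
    (∀ i j, i ≠ j → Disjoint (rng (fb i)) (rng (fb j))) ∧
    (∀ i j, Disjoint (rng (fr i)) (rng (fb j))) ∧
    (k * PX.card ≤ (∑ i, (rng (fr i) ∩ X).card) + (∑ i, (rng (fb i) ∩ X).card) + s' + k) ∧
    (k * PY.card ≤ (∑ i, (rng (fr i) ∩ Y).card) + (∑ i, (rng (fb i) ∩ Y).card) + s' + k)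

set_option maxHeartbeats 2000000 in
lemma step (X Y : Finset V) (hXY : Disjoint X Y) {M : ℕ} (BX RY : Fin M → W → V)
    (s' α k t : ℕ) (hk1 : 0 < k) (hkW : Fintype.card W = k)
    (hBXmem : ∀ p w, BX p w ∈ X) (hRYmem : ∀ p w, RY p w ∈ Y)
    (hBXinj : ∀ p, Function.Injective (BX p)) (hRYinj : ∀ p, Function.Injective (RY p))
    (hBXdisj : ∀ p q : Fin M, p ≠ q → Disjoint (rng (BX p)) (rng (BX q)))
    (hRYdisj : ∀ p q : Fin M, p ≠ q → Disjoint (rng (RY p)) (rng (RY q)))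
    (hR : ∀ X' Y' : Finset V, Disjoint X' Y' → X'.card = s' → Y'.card = s' →
      (∃ f : W → V, IsMonoCopy H G χ true f ∧ (∀ a, f a ∈ X' ∪ Y') ∧
        α ≤ (Set.range f ∩ ↑X').ncard) ∨
      (∃ f : W → V, IsMonoCopy H G χ false f ∧ (∀ a, f a ∈ X' ∪ Y') ∧
        α ≤ (Set.range f ∩ ↑Y').ncard))
    (hsup : 2 * t * k + s' + k ≤ k * M)
    (r b : ℕ) (hr : r < t) (hb : b < t)
    (hG : Good H G χ X Y BX RY s' α k r b) :
    Good H G χ X Y BX RY s' α k (r + 1) b ∨ Good H G χ X Y BX RY s' α k r (b + 1) := by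
  classical
  obtain ⟨fr, fb, PX, PY, h1, h2, h3, h4, h5, h6, h7, h8, h9, h10, h11, h12, h13, h14, h15⟩ := hG
  set SX := (∑ i, (rng (fr i) ∩ X).card) + (∑ i, (rng (fb i) ∩ X).card) with hSX
  set SY := (∑ i, (rng (fr i) ∩ Y).card) + (∑ i, (rng (fb i) ∩ Y).card) with hSYdef
  have hcardZ : ∀ (n : ℕ) (f : Fin n → W → V), (∀ i, Function.Injective (f i)) →
      ∀ Z : Finset V, ∑ i, (rng (f i) ∩ Z).card ≤ n * k := by
    intro n f hf Z
    calc ∑ i, (rng (f i) ∩ Z).card ≤ ∑ _i : Fin n, k :=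
        Finset.sum_le_sum (fun i _ => by
          rw [← hkW, ← card_rng (hf i)]
          exact Finset.card_le_card Finset.inter_subset_left)
    _ = n * k := by simp [mul_comm]
  have hSXle : SX ≤ (r + b) * k := by
    have e1 := hcardZ r fr (fun i => (h1 i).1.1) X
    have e2 := hcardZ b fb (fun i => (h2 i).1.1) X
    rw [hSX]; nlinarith
  have hSYle : SY ≤ (r + b) * k := by
    have e1 := hcardZ r fr (fun i => (h1 i).1.1) Y
    have e2 := hcardZ b fb (fun i => (h2 i).1.1) Y
    rw [hSYdef]; nlinarith
  have hsupX : SX + s' + k ≤ k * M := by nlinarith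
  have hsupY : SY + s' + k ≤ k * M := by nlinarith
  obtain ⟨PX', hPXsub, hPXlow, hPXup⟩ := pad PX k SX s' hk1 h14 hsupX
  obtain ⟨PY', hPYsub, hPYlow, hPYup⟩ := pad PY k SY s' hk1 h15 hsupY
  set UsedF : Finset V :=
    (Finset.univ.biUnion fun i => rng (fr i)) ∪ (Finset.univ.biUnion fun i => rng (fb i))
    with hUsedF
  have hUsedfr : ∀ i, rng (fr i) ⊆ UsedF := fun i => by
    rw [hUsedF]
    exact (Finset.subset_biUnion_of_mem (fun j => rng (fr j))
      (Finset.mem_univ i)).trans Finset.subset_union_left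
  have hUsedfb : ∀ i, rng (fb i) ⊆ UsedF := fun i => by
    rw [hUsedF]
    exact (Finset.subset_biUnion_of_mem (fun j => rng (fb j))
      (Finset.mem_univ i)).trans Finset.subset_union_right
  -- free vertices on the X side
  have hfree : ∀ (P' : Finset (Fin M)) (O : Fin M → W → V) (Z : Finset V) (SZ : ℕ),
      (∀ p w, O p w ∈ Z) → (∀ p, Function.Injective (O p)) →
      (∀ p q : Fin M, p ≠ q → Disjoint (rng (O p)) (rng (O q))) →
      ((∑ i, (rng (fr i) ∩ Z).card) + (∑ i, (rng (fb i) ∩ Z).card) = SZ) →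
      (SZ + s' ≤ k * P'.card) →
      s' ≤ ((P'.biUnion fun p => rng (O p)) \ UsedF).card := by
    intro P' O Z SZ hOZ hOinj hOdisj hSZ hlow
    set AZ := P'.biUnion fun p => rng (O p) with hAZ
    have hAZcard : AZ.card = k * P'.card := by
      rw [hAZ, Finset.card_biUnion (fun p _ q _ hpq => hOdisj p q hpq)]
      rw [Finset.sum_congr rfl (fun p _ => card_rng (hOinj p))]
      simp [hkW, mul_comm]
    have hAZZ : AZ ⊆ Z := by
      rw [hAZ]
      intro x hx
      obtain ⟨p, _, hx⟩ := Finset.mem_biUnion.mp hx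
      obtain ⟨w, _, rfl⟩ := Finset.mem_image.mp hx
      exact hOZ p w
    have hinter : (AZ ∩ UsedF).card ≤ SZ := by
      have hsub2 : AZ ∩ UsedF ⊆
          (Finset.univ.biUnion fun i => rng (fr i) ∩ Z) ∪
          (Finset.univ.biUnion fun i => rng (fb i) ∩ Z) := by
        intro x hx
        obtain ⟨hxA, hxU⟩ := Finset.mem_inter.mp hx
        have hxZ : x ∈ Z := hAZZ hxA
        rw [hUsedF] at hxU
        rcases Finset.mem_union.mp hxU with h | h
        · obtain ⟨i, _, hi⟩ := Finset.mem_biUnion.mp h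
          exact Finset.mem_union_left _
            (Finset.mem_biUnion.mpr ⟨i, Finset.mem_univ i, Finset.mem_inter.mpr ⟨hi, hxZ⟩⟩)
        · obtain ⟨i, _, hi⟩ := Finset.mem_biUnion.mp h
          exact Finset.mem_union_right _
            (Finset.mem_biUnion.mpr ⟨i, Finset.mem_univ i, Finset.mem_inter.mpr ⟨hi, hxZ⟩⟩)
      calc (AZ ∩ UsedF).card ≤ _ := Finset.card_le_card hsub2
      _ ≤ _ := Finset.card_union_le _ _
      _ ≤ SZ := by
          rw [← hSZ]
          exact Nat.add_le_add (Finset.card_biUnion_le) (Finset.card_biUnion_le)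
    have := Finset.card_sdiff_add_card_inter AZ UsedF
    omega
  have hfreeX : s' ≤ ((PX'.biUnion fun p => rng (BX p)) \ UsedF).card :=
    hfree PX' BX X SX hBXmem hBXinj hBXdisj rfl hPXlow
  have hfreeY : s' ≤ ((PY'.biUnion fun p => rng (RY p)) \ UsedF).card :=
    hfree PY' RY Y SY hRYmem hRYinj hRYdisj rfl hPYlow
  obtain ⟨X', hX'sub, hX'card⟩ := Finset.exists_subset_card_eq hfreeX
  obtain ⟨Y', hY'sub, hY'card⟩ := Finset.exists_subset_card_eq hfreeY
  have hPXresX : (PX'.biUnion fun p => rng (BX p)) ⊆ X := by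
    intro x hx
    obtain ⟨p, _, hx⟩ := Finset.mem_biUnion.mp hx
    obtain ⟨w, _, rfl⟩ := Finset.mem_image.mp hx
    exact hBXmem p w
  have hPYresY : (PY'.biUnion fun p => rng (RY p)) ⊆ Y := by
    intro x hx
    obtain ⟨p, _, hx⟩ := Finset.mem_biUnion.mp hx
    obtain ⟨w, _, rfl⟩ := Finset.mem_image.mp hx
    exact hRYmem p w
  have hX'X : X' ⊆ X := hX'sub.trans ((Finset.sdiff_subset).trans hPXresX)
  have hY'Y : Y' ⊆ Y := hY'sub.trans ((Finset.sdiff_subset).trans hPYresY)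
  have hX'free : ∀ x ∈ X', x ∉ UsedF := by
    intro x hx
    exact (Finset.mem_sdiff.mp (hX'sub hx)).2
  have hY'free : ∀ x ∈ Y', x ∉ UsedF := by
    intro x hx
    exact (Finset.mem_sdiff.mp (hY'sub hx)).2
  have hX'freeset : X' ⊆ PX'.biUnion fun p => rng (BX p) :=
    hX'sub.trans Finset.sdiff_subset
  have hY'freeset : Y' ⊆ PY'.biUnion fun p => rng (RY p) :=
    hY'sub.trans Finset.sdiff_subset
  have hXY' : Disjoint X' Y' := hXY.mono hX'X hY'Y
  -- monotone transport of old pool-subset facts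
  have hmonoX : (PX.biUnion fun p => rng (BX p)) ⊆ PX'.biUnion fun p => rng (BX p) :=
    Finset.biUnion_subset_biUnion_of_subset_left _ hPXsub
  have hmonoY : (PY.biUnion fun p => rng (RY p)) ⊆ PY'.biUnion fun p => rng (RY p) :=
    Finset.biUnion_subset_biUnion_of_subset_left _ hPYsub
  rcases hR X' Y' hXY' hX'card hY'card with ⟨f, hf, hfmem, hfα⟩ | ⟨f, hf, hfmem, hfα⟩
  · -- red copy found
    left
    have hrngf : rng f ⊆ X' ∪ Y' := by
      intro x hx
      obtain ⟨w, _, rfl⟩ := Finset.mem_image.mp hx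
      exact hfmem w
    have hfX : rng f ∩ X ⊆ X' := by
      intro x hx
      obtain ⟨hx1, hx2⟩ := Finset.mem_inter.mp hx
      rcases Finset.mem_union.mp (hrngf hx1) with h | h
      · exact h
      · exact absurd hx2 (Finset.disjoint_right.mp hXY (hY'Y h))
    have hfY : rng f ∩ Y ⊆ Y' := by
      intro x hx
      obtain ⟨hx1, hx2⟩ := Finset.mem_inter.mp hx
      rcases Finset.mem_union.mp (hrngf hx1) with h | h
      · exact absurd hx2 (Finset.disjoint_left.mp hXY (hX'X h))
      · exact h
    have hfXY : rng f ⊆ X ∪ Y :=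
      hrngf.trans (Finset.union_subset_union hX'X hY'Y)
    have hαf : α ≤ (rng f ∩ X).card := by
      have he : Set.range f ∩ ↑X' = ↑(rng f ∩ X') := by
        rw [Finset.coe_inter, coe_rng]
      rw [he, Set.ncard_coe_finset] at hfα
      calc α ≤ (rng f ∩ X').card := hfα
      _ ≤ (rng f ∩ X).card :=
          Finset.card_le_card (Finset.inter_subset_inter (le_refl _) hX'X)
    have hdisjfr : ∀ i, Disjoint (rng f) (rng (fr i)) := by
      intro i
      rw [Finset.disjoint_left]
      intro x hx hx2
      rcases Finset.mem_union.mp (hrngf hx) with h | h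
      · exact hX'free x h (hUsedfr i hx2)
      · exact hY'free x h (hUsedfr i hx2)
    have hdisjfb : ∀ i, Disjoint (rng f) (rng (fb i)) := by
      intro i
      rw [Finset.disjoint_left]
      intro x hx hx2
      rcases Finset.mem_union.mp (hrngf hx) with h | h
      · exact hX'free x h (hUsedfb i hx2)
      · exact hY'free x h (hUsedfb i hx2)
    have hsumZ : ∀ Z : Finset V,
        ∑ i : Fin (r+1), (rng ((Fin.snoc fr f : Fin (r+1) → W → V) i) ∩ Z).card
        = (∑ i : Fin r, (rng (fr i) ∩ Z).card) + (rng f ∩ Z).card := by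
      intro Z
      rw [Fin.sum_univ_castSucc]
      simp [Fin.snoc_castSucc, Fin.snoc_last]
    refine ⟨Fin.snoc fr f, fb, PX', PY', ?_, h2, ?_, h4, ?_, h6, ?_, ?_, ?_, ?_, ?_, h12, ?_, ?_, ?_⟩
    · intro i
      refine Fin.lastCases ?_ (fun j => ?_) i <;> simp [Fin.snoc_castSucc, Fin.snoc_last, hf, h1]
    · intro i
      refine Fin.lastCases ?_ (fun j => ?_) i <;> simp only [Fin.snoc_castSucc, Fin.snoc_last]
      · exact hfXY
      · exact h3 j
    · intro i
      refine Fin.lastCases ?_ (fun j => ?_) i <;> simp only [Fin.snoc_castSucc, Fin.snoc_last]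
      · exact hαf
      · exact h5 j
    · intro i
      refine Fin.lastCases ?_ (fun j => ?_) i <;> simp only [Fin.snoc_castSucc, Fin.snoc_last]
      · exact hfX.trans hX'freeset
      · exact (h7 j).trans hmonoX
    · intro i
      exact (h8 i).trans hmonoX
    · intro i
      refine Fin.lastCases ?_ (fun j => ?_) i <;> simp only [Fin.snoc_castSucc, Fin.snoc_last]
      · exact hfY.trans hY'freeset
      · exact (h9 j).trans hmonoY
    · intro i
      exact (h10 i).trans hmonoY
    · intro i j hij
      rcases Fin.eq_castSucc_or_eq_last i with ⟨i', rfl⟩ | rfl <;>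
        rcases Fin.eq_castSucc_or_eq_last j with ⟨j', rfl⟩ | rfl <;>
        simp only [Fin.snoc_castSucc, Fin.snoc_last]
      · exact h11 i' j' (fun h => hij (by rw [h]))
      · exact (hdisjfr i').symm
      · exact hdisjfr j'
      · exact absurd rfl hij
    · intro i j
      rcases Fin.eq_castSucc_or_eq_last i with ⟨i', rfl⟩ | rfl <;>
        simp only [Fin.snoc_castSucc, Fin.snoc_last]
      · exact h13 i' j
      · exact hdisjfb j
    · rw [hsumZ X]
      have : SX + s' + k ≤ (∑ i : Fin r, (rng (fr i) ∩ X).card) + (rng f ∩ X).card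
          + (∑ i, (rng (fb i) ∩ X).card) + s' + k := by
        rw [hSX]; omega
      omega
    · rw [hsumZ Y]
      omega
  · -- blue copy found
    right
    have hrngf : rng f ⊆ X' ∪ Y' := by
      intro x hx
      obtain ⟨w, _, rfl⟩ := Finset.mem_image.mp hx
      exact hfmem w
    have hfX : rng f ∩ X ⊆ X' := by
      intro x hx
      obtain ⟨hx1, hx2⟩ := Finset.mem_inter.mp hx
      rcases Finset.mem_union.mp (hrngf hx1) with h | h
      · exact h
      · exact absurd hx2 (Finset.disjoint_right.mp hXY (hY'Y h))
    have hfY : rng f ∩ Y ⊆ Y' := by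
      intro x hx
      obtain ⟨hx1, hx2⟩ := Finset.mem_inter.mp hx
      rcases Finset.mem_union.mp (hrngf hx1) with h | h
      · exact absurd hx2 (Finset.disjoint_left.mp hXY (hX'X h))
      · exact h
    have hfXY : rng f ⊆ X ∪ Y :=
      hrngf.trans (Finset.union_subset_union hX'X hY'Y)
    have hαf : α ≤ (rng f ∩ Y).card := by
      have he : Set.range f ∩ ↑Y' = ↑(rng f ∩ Y') := by
        rw [Finset.coe_inter, coe_rng]
      rw [he, Set.ncard_coe_finset] at hfα
      calc α ≤ (rng f ∩ Y').card := hfα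
      _ ≤ (rng f ∩ Y).card :=
          Finset.card_le_card (Finset.inter_subset_inter (le_refl _) hY'Y)
    have hdisjfr : ∀ i, Disjoint (rng f) (rng (fr i)) := by
      intro i
      rw [Finset.disjoint_left]
      intro x hx hx2
      rcases Finset.mem_union.mp (hrngf hx) with h | h
      · exact hX'free x h (hUsedfr i hx2)
      · exact hY'free x h (hUsedfr i hx2)
    have hdisjfb : ∀ i, Disjoint (rng f) (rng (fb i)) := by
      intro i
      rw [Finset.disjoint_left]
      intro x hx hx2
      rcases Finset.mem_union.mp (hrngf hx) with h | h
      · exact hX'free x h (hUsedfb i hx2)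
      · exact hY'free x h (hUsedfb i hx2)
    have hsumZ : ∀ Z : Finset V,
        ∑ i : Fin (b+1), (rng ((Fin.snoc fb f : Fin (b+1) → W → V) i) ∩ Z).card
        = (∑ i : Fin b, (rng (fb i) ∩ Z).card) + (rng f ∩ Z).card := by
      intro Z
      rw [Fin.sum_univ_castSucc]
      simp [Fin.snoc_castSucc, Fin.snoc_last]
    refine ⟨fr, Fin.snoc fb f, PX', PY', h1, ?_, h3, ?_, h5, ?_, ?_, ?_, ?_, ?_, h11, ?_, ?_, ?_, ?_⟩
    · intro i
      refine Fin.lastCases ?_ (fun j => ?_) i <;> simp [Fin.snoc_castSucc, Fin.snoc_last, hf, h2]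
    · intro i
      refine Fin.lastCases ?_ (fun j => ?_) i <;> simp only [Fin.snoc_castSucc, Fin.snoc_last]
      · exact hfXY
      · exact h4 j
    · intro i
      refine Fin.lastCases ?_ (fun j => ?_) i <;> simp only [Fin.snoc_castSucc, Fin.snoc_last]
      · exact hαf
      · exact h6 j
    · intro i
      exact (h7 i).trans hmonoX
    · intro i
      refine Fin.lastCases ?_ (fun j => ?_) i <;> simp only [Fin.snoc_castSucc, Fin.snoc_last]
      · exact hfX.trans hX'freeset
      · exact (h8 j).trans hmonoX
    · intro i
      exact (h9 i).trans hmonoY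
    · intro i
      refine Fin.lastCases ?_ (fun j => ?_) i <;> simp only [Fin.snoc_castSucc, Fin.snoc_last]
      · exact hfY.trans hY'freeset
      · exact (h10 j).trans hmonoY
    · intro i j hij
      rcases Fin.eq_castSucc_or_eq_last i with ⟨i', rfl⟩ | rfl <;>
        rcases Fin.eq_castSucc_or_eq_last j with ⟨j', rfl⟩ | rfl <;>
        simp only [Fin.snoc_castSucc, Fin.snoc_last]
      · exact h12 i' j' (fun h => hij (by rw [h]))
      · exact (hdisjfb i').symm
      · exact hdisjfb j'
      · exact absurd rfl hij
    · intro i j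
      rcases Fin.eq_castSucc_or_eq_last j with ⟨j', rfl⟩ | rfl <;>
        simp only [Fin.snoc_castSucc, Fin.snoc_last]
      · exact h13 i j'
      · exact (hdisjfr i).symm
    · rw [hsumZ X]
      omega
    · rw [hsumZ Y]
      omega

lemma reach (X Y : Finset V) (hXY : Disjoint X Y) {M : ℕ} (BX RY : Fin M → W → V)
    (s' α k t : ℕ) (hk1 : 0 < k) (hkW : Fintype.card W = k)
    (hBXmem : ∀ p w, BX p w ∈ X) (hRYmem : ∀ p w, RY p w ∈ Y)
    (hBXinj : ∀ p, Function.Injective (BX p)) (hRYinj : ∀ p, Function.Injective (RY p))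
    (hBXdisj : ∀ p q : Fin M, p ≠ q → Disjoint (rng (BX p)) (rng (BX q)))
    (hRYdisj : ∀ p q : Fin M, p ≠ q → Disjoint (rng (RY p)) (rng (RY q)))
    (hR : ∀ X' Y' : Finset V, Disjoint X' Y' → X'.card = s' → Y'.card = s' →
      (∃ f : W → V, IsMonoCopy H G χ true f ∧ (∀ a, f a ∈ X' ∪ Y') ∧
        α ≤ (Set.range f ∩ ↑X').ncard) ∨
      (∃ f : W → V, IsMonoCopy H G χ false f ∧ (∀ a, f a ∈ X' ∪ Y') ∧
        α ≤ (Set.range f ∩ ↑Y').ncard))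
    (hsup : 2 * t * k + s' + k ≤ k * M) :
    ∀ m r b, 2 * t ≤ r + b + m → r < t → b < t →
      Good H G χ X Y BX RY s' α k r b →
      ∃ r' b', ((r' = t ∧ b' < t) ∨ (b' = t ∧ r' < t)) ∧
        Good H G χ X Y BX RY s' α k r' b' := by
  intro m
  induction m with
  | zero => intro r b hm hr hb _; omega
  | succ m ih =>
    intro r b hm hr hb hG
    rcases step H G χ X Y hXY BX RY s' α k t hk1 hkW hBXmem hRYmem hBXinj hRYinj
      hBXdisj hRYdisj hR hsup r b hr hb hG with h | h
    · by_cases hrt : r + 1 = t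
      · exact ⟨r + 1, b, Or.inl ⟨hrt, hb⟩, h⟩
      · exact ih (r + 1) b (by omega) (by omega) hb h
    · by_cases hbt : b + 1 = t
      · exact ⟨r, b + 1, Or.inr ⟨hbt, hr⟩, h⟩
      · exact ih r (b + 1) (by omega) hr (by omega) h

end Stmt11Aux

open Stmt11Aux in
set_option maxHeartbeats 2000000 in
/-- The cluster-construction lemma: if `G` is `(H, η²s)`-rich, `X` and `Y` are disjoint
`s`-sets such that `G[X]` has a blue `H`-tiling with `s/k` copies and `G[Y]` a red
`H`-tiling with `s/k` copies, then some `T ⊆ X ∪ Y` spans an `(H,η)`-cluster. -/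
theorem stmt11 {W V : Type*} [Fintype W] [DecidableEq V] (H : SimpleGraph W) (k α : ℕ)
    (hk : Fintype.card W = k) (hk3 : 3 ≤ k) (hα : _root_.indepNum H = α)
    (s : ℕ) (hs : 0 < s) (hdvd : 2 * k ∣ s)
    (η : ℝ) (hη0 : 0 < η) (hη1 : η < 1)
    (G : SimpleGraph V) (χ : Sym2 V → Bool)
    (hrich : IsRich H G (Nat.floor (η ^ 2 * s)))
    (X Y : Finset V) (hXY : Disjoint X Y) (hX : X.card = s) (hY : Y.card = s)
    (hXb : MonoTilingOn H G χ false (↑X) (s / k))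
    (hYr : MonoTilingOn H G χ true (↑Y) (s / k)) :
    ∃ T : Set V, T ⊆ ↑X ∪ ↑Y ∧ IsCluster H G χ k α η T := by
  classical
  have hk0 : 0 < k := by omega
  have hαk : α ≤ k := by
    rw [← hα, ← hk]
    exact Nat.findGreatest_le _
  have hαkR : (α : ℝ) ≤ k := by exact_mod_cast hαk
  have hk3R : (3 : ℝ) ≤ k := by exact_mod_cast hk3
  have hD : (0 : ℝ) < 2 * k - α := by linarith
  by_cases hbig : (α : ℝ) ≤ 2 * k * η * (2 * k - α)
  · -- big η: take T = X ∪ Y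
    have hcoe : ((X ∪ Y : Finset V) : Set V) = ↑X ∪ ↑Y := Finset.coe_union X Y
    refine ⟨↑X ∪ ↑Y, subset_rfl, ?_, s / k, s / k,
      tiling_mono hYr (Set.subset_union_right), tiling_mono hXb (Set.subset_union_left),
      ?_, ?_⟩
    · obtain ⟨x, hx⟩ := Finset.card_pos.mp (hX ▸ hs)
      exact ⟨x, Set.mem_union_left _ (Finset.mem_coe.mpr hx)⟩
    all_goals {
      have hncard : ((↑X ∪ ↑Y : Set V)).ncard = 2 * s := by
        rw [← hcoe, Set.ncard_coe_finset, Finset.card_union_of_disjoint hXY, hX, hY]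
        ring
      rw [hncard]
      have hsk : ((s / k : ℕ) : ℝ) * k = s := by
        exact_mod_cast congrArg (Nat.cast : ℕ → ℝ)
          (Nat.div_mul_cancel (dvd_trans (Dvd.intro_left 2 rfl) hdvd))
      have hu0 : (0 : ℝ) < ((s / k : ℕ) : ℝ) := by
        have hs0 : (0:ℝ) < s := by exact_mod_cast hs
        nlinarith
      rw [sub_le_iff_le_add, div_le_iff₀ hD]
      have hsR : (s:ℝ) = ((s / k : ℕ) : ℝ) * k := hsk.symm
      push_cast
      rw [hsR]
      nlinarith [mul_le_mul_of_nonneg_left hbig (le_of_lt hu0)]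
    }
  · -- small η branch
    push_neg at hbig
    set s' := Nat.floor (η ^ 2 * (s : ℝ)) with hs'def
    have hα1 : 1 ≤ α := by
      by_contra h
      have : α = 0 := by omega
      rw [this] at hbig
      simp only [Nat.cast_zero, sub_zero] at hbig
      have hpos : (0:ℝ) ≤ 2 * (k:ℝ) * η * (2 * (k:ℝ)) := by positivity
      linarith
    have hα1R : (1 : ℝ) ≤ α := by exact_mod_cast hα1
    have hηk : 2 * k * η ≤ 1 := by nlinarith
    -- richness, with indepNum rewritten
    have hR : ∀ X' Y' : Finset V, Disjoint X' Y' → X'.card = s' → Y'.card = s' →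
        (∃ f : W → V, IsMonoCopy H G χ true f ∧ (∀ a, f a ∈ X' ∪ Y') ∧
          α ≤ (Set.range f ∩ ↑X').ncard) ∨
        (∃ f : W → V, IsMonoCopy H G χ false f ∧ (∀ a, f a ∈ X' ∪ Y') ∧
          α ≤ (Set.range f ∩ ↑Y').ncard) := by
      intro X' Y' h1 h2 h3
      have := hrich χ X' Y' h1 h2 h3
      rwa [hα] at this
    have hW : Nonempty W := by
      rw [← Fintype.card_pos_iff, hk]; omega
    by_cases hs0 : s' = 0
    · exfalso
      rcases hR ∅ ∅ (by simp) (by simp [hs0]) (by simp [hs0]) with ⟨f, _, hmem, _⟩ | ⟨f, _, hmem, _⟩ <;>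
        simpa using hmem (Classical.arbitrary W)
    -- now s' ≥ 1
    have hs'1 : 1 ≤ s' := Nat.one_le_iff_ne_zero.mpr hs0
    have hs'R : (s' : ℝ) ≤ η ^ 2 * s := Nat.floor_le (by positivity)
    have hs'1R : (1 : ℝ) ≤ s' := by exact_mod_cast hs'1
    have hη2s : (1 : ℝ) ≤ η ^ 2 * s := le_trans hs'1R hs'R
    have hηs : 2 * k ≤ η * s := by nlinarith
    set t := ⌈((s' : ℝ) + k) / (η * k ^ 2)⌉₊ with htdef
    have hdenpos : (0 : ℝ) < η * k ^ 2 := by positivity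
    have hargpos : (0 : ℝ) < ((s' : ℝ) + k) / (η * k ^ 2) := by positivity
    have ht1 : 1 ≤ t := by
      rw [htdef]
      exact Nat.one_le_iff_ne_zero.mpr (by positivity)
    have hnum : (s' : ℝ) + k ≤ η * t * (k * k) := by
      have h1 := Nat.le_ceil (((s' : ℝ) + k) / (η * k ^ 2))
      rw [div_le_iff₀ hdenpos] at h1
      calc (s' : ℝ) + k ≤ t * (η * k ^ 2) := h1
      _ = η * t * (k * k) := by ring
    have htup : (t : ℝ) ≤ ((s' : ℝ) + k) / (η * k ^ 2) + 1 :=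
      le_of_lt (Nat.ceil_lt_add_one (le_of_lt hargpos))
    have hA : η * k ^ 2 * t ≤ (s' : ℝ) + k + η * k ^ 2 := by
      have := mul_le_mul_of_nonneg_right htup (le_of_lt hdenpos)
      rw [add_mul, div_mul_cancel₀ _ (ne_of_gt hdenpos), one_mul] at this
      linarith
    have hsupR : (2 * t * k + s' + k : ℝ) ≤ s := by
      have hkR0 : (0:ℝ) < k := by linarith
      have hη6 : 6 * η ≤ 1 := by nlinarith
      have hη36 : η ^ 2 ≤ 1 / 36 := by nlinarith
      have hηspos : (0:ℝ) ≤ η * s := by positivity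
      have hηkspos : (0:ℝ) ≤ η * k * s := by positivity
      have hm1 : η * k * (2 * (t:ℝ) * k) ≤ 2 * (s':ℝ) + 2 * k + 2 * η * k ^ 2 := by
        nlinarith [hA]
      have hm2 : η * k * (s':ℝ) ≤ η * k * (η ^ 2 * s) :=
        mul_le_mul_of_nonneg_left hs'R (by positivity)
      have hm3 : η * k * (η ^ 2 * s) ≤ (1/36) * (η * k * s) := by
        nlinarith [mul_le_mul_of_nonneg_right hη36 hηkspos]
      have hm5 : η ^ 2 * s ≤ (1/6) * (η * s) := by
        nlinarith [mul_le_mul_of_nonneg_right (by linarith : η ≤ 1/6) hηspos]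
      have hm6 : η * s ≤ (1/3) * (η * k * s) := by
        nlinarith [mul_le_mul_of_nonneg_right (by linarith : (3:ℝ) ≤ k) hηspos]
      have hm8 : 3 * η * k ^ 2 ≤ (3/2) * k := by
        nlinarith [mul_le_mul_of_nonneg_right hηk hkR0.le]
      have hcancel : η * k * (2 * t * k + s' + k) ≤ η * k * s := by
        have expand : η * k * (2 * (t:ℝ) * k + s' + k)
            = η * k * (2 * (t:ℝ) * k) + η * k * (s':ℝ) + η * k ^ 2 := by ring
        rw [expand]
        linarith [hs'R, hηs]
      have hηkpos : (0:ℝ) < η * k := by positivity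
      exact le_of_mul_le_mul_left hcancel hηkpos
    -- Nat-level supply
    set M := s / k with hMdef
    have hkM : k * M = s := by
      rw [hMdef, Nat.mul_div_cancel' (dvd_trans (Dvd.intro_left 2 rfl) hdvd)]
    have hsup : 2 * t * k + s' + k ≤ k * M := by
      rw [hkM]
      exact_mod_cast hsupR
    -- unpack the two original tilings
    obtain ⟨BX, hBX1, hBX2, hBX3⟩ := hXb
    obtain ⟨RY, hRY1, hRY2, hRY3⟩ := hYr
    have hBXmem : ∀ p w, BX p w ∈ X := fun p w => Finset.mem_coe.mp (hBX2 p w)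
    have hRYmem : ∀ p w, RY p w ∈ Y := fun p w => Finset.mem_coe.mp (hRY2 p w)
    have hBXinj : ∀ p, Function.Injective (BX p) := fun p => (hBX1 p).1.1
    have hRYinj : ∀ p, Function.Injective (RY p) := fun p => (hRY1 p).1.1
    have hBXdisj : ∀ p q : Fin M, p ≠ q → Disjoint (rng (BX p)) (rng (BX q)) :=
      fun p q h => disjoint_rng_iff.mpr (hBX3 p q h)
    have hRYdisj : ∀ p q : Fin M, p ≠ q → Disjoint (rng (RY p)) (rng (RY q)) :=
      fun p q h => disjoint_rng_iff.mpr (hRY3 p q h)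
    -- initial state
    have hGood0 : Good H G χ X Y BX RY s' α k 0 0 := by
      refine ⟨Fin.elim0, Fin.elim0, ∅, ∅, ?_, ?_, ?_, ?_, ?_, ?_, ?_, ?_, ?_, ?_, ?_, ?_, ?_, ?_, ?_⟩
      all_goals first
        | (intro i; exact i.elim0)
        | (intro i j; exact i.elim0)
        | (intro i j hij; exact i.elim0)
        | simp
    obtain ⟨r', b', hcase, hG⟩ := reach H G χ X Y hXY BX RY s' α k t hk0 hk
      hBXmem hRYmem hBXinj hRYinj hBXdisj hRYdisj hR hsup (2 * t) 0 0 (by omega)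
      (by omega) (by omega) hGood0
    -- per-copy bound: a copy with ≥ α vertices on one side has ≤ k - α on the other
    have hsplit : ∀ (f : W → V), Function.Injective f → rng f ⊆ X ∪ Y →
        ∀ Z Z' : Finset V, Disjoint Z Z' → X ∪ Y = Z ∪ Z' → α ≤ (rng f ∩ Z').card →
        (rng f ∩ Z).card ≤ k - α := by
      intro f hinj hsub Z Z' hZZ' hunion hαZ'
      have h1 : rng f ∩ Z ∪ rng f ∩ Z' = rng f := by
        rw [← Finset.inter_union_distrib_left, ← hunion]
        exact Finset.inter_eq_left.mpr hsub
      have h2 : Disjoint (rng f ∩ Z) (rng f ∩ Z') :=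
        Finset.disjoint_of_subset_left Finset.inter_subset_right
          (Finset.disjoint_of_subset_right Finset.inter_subset_right hZZ')
      have h3 : (rng f ∩ Z).card + (rng f ∩ Z').card = k := by
        rw [← Finset.card_union_of_disjoint h2, h1, card_rng hinj, hk]
      omega
    rcases hcase with ⟨hrt, hblt⟩ | ⟨hbt, hrlt⟩
    · -- r' = t : red cluster
      subst hrt
      obtain ⟨fr, fb, PX, PY, h1, h2, h3, h4, h5, h6, h7, h8, h9, h10, h11, h12, h13, h14, h15⟩ := hG
      have hcount : k * PX.card ≤ (∑ i, ((rng (fr i)) ∩ X).card) + ((t - 1) * (k - α) + s' + k) := by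
        have hb : ∀ i, (rng (fb i) ∩ X).card ≤ k - α := fun i =>
          hsplit (fb i) ((h2 i).1.1) (h4 i) X Y hXY rfl (h6 i)
        have hsum : (∑ i, (rng (fb i) ∩ X).card) ≤ b' * (k - α) := by
          calc (∑ i, (rng (fb i) ∩ X).card) ≤ ∑ _i : Fin b', (k - α) :=
            Finset.sum_le_sum (fun i _ => hb i)
          _ = b' * (k - α) := by simp [mul_comm]
        have hble : b' * (k - α) ≤ (t - 1) * (k - α) :=
          Nat.mul_le_mul_right _ (by omega)
        omega
      have htM : t ≤ M := by
        have h2 : k * t ≤ k * M := by nlinarith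
        exact Nat.le_of_mul_le_mul_left h2 hk0
      obtain ⟨T, hT1, hT2, a, htil1, htil2, hineq1, hineq2⟩ :=
        extract H G χ k α s' t M η false hk hk0 hαk ht1 hη0 hnum X Y BX
          hBX1 hBXmem hBX3 fr (by rw [Bool.not_false]; exact h1) h3 h5 h11 PX h7 hcount htM
      rw [Bool.not_false] at htil1
      exact ⟨T, hT1, hT2, t, a, htil1, htil2, hineq1, hineq2⟩
    · -- b' = t : blue cluster
      subst hbt
      obtain ⟨fr, fb, PX, PY, h1, h2, h3, h4, h5, h6, h7, h8, h9, h10, h11, h12, h13, h14, h15⟩ := hG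
      have hcount : k * PY.card ≤ (∑ i, ((rng (fb i)) ∩ Y).card) + ((t - 1) * (k - α) + s' + k) := by
        have hb : ∀ i, (rng (fr i) ∩ Y).card ≤ k - α := fun i =>
          hsplit (fr i) ((h1 i).1.1) (h3 i) Y X hXY.symm (Finset.union_comm X Y) (h5 i)
        have hsum : (∑ i, (rng (fr i) ∩ Y).card) ≤ r' * (k - α) := by
          calc (∑ i, (rng (fr i) ∩ Y).card) ≤ ∑ _i : Fin r', (k - α) :=
            Finset.sum_le_sum (fun i _ => hb i)
          _ = r' * (k - α) := by simp [mul_comm]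
        have hrle : r' * (k - α) ≤ (t - 1) * (k - α) :=
          Nat.mul_le_mul_right _ (by omega)
        omega
      have htM : t ≤ M := by
        have h2 : k * t ≤ k * M := by nlinarith
        exact Nat.le_of_mul_le_mul_left h2 hk0
      obtain ⟨T, hT1, hT2, a, htil1, htil2, hineq1, hineq2⟩ :=
        extract H G χ k α s' t M η true hk hk0 hαk ht1 hη0 hnum Y X RY
          hRY1 hRYmem hRY3 fb (by rw [Bool.not_true]; exact h2)
          (fun i => by rw [Finset.union_comm]; exact h4 i) h6 h12 PY h10 hcount htM
      rw [Bool.not_true] at htil1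
      refine ⟨T, ?_, hT2, a, t, htil2, htil1, hineq2, hineq1⟩
      rw [Set.union_comm]
      exact hT1
end

section
/- Let ε > 0, let n be divisible appropriately, and let G be an n-vertex 2-edge-coloured graph such that (a) every vertex subset U with |U| ≥ εn contains a monochromatic triangle, and (b) G is (K_3, 4εn)-rich. Then G contains a monochromatic K_3-tiling with at least n/5 - εn triangles. -/
open SimpleGraph

/-- `t` is a monochromatic triangle of colour `col` (red = `true`, blue = `false`). -/
def IsMonoTriangle {V : Type*} (G : SimpleGraph V) (χ : Sym2 V → Bool) (col : Bool)
    (t : Finset V) : Prop :=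
  t.card = 3 ∧ ∀ x ∈ t, ∀ y ∈ t, x ≠ y → G.Adj x y ∧ χ s(x, y) = col

/-- `G` is `(K₃, s)`-rich: for every 2-colouring of its edges and every pair of disjoint
`s`-sets `X`, `Y`, there is a red triangle in `G[X ∪ Y]` meeting `X` or a blue triangle
in `G[X ∪ Y]` meeting `Y`. -/
def IsRich3 {V : Type*} [DecidableEq V] (G : SimpleGraph V) (s : ℕ) : Prop :=
  ∀ χ : Sym2 V → Bool, ∀ X Y : Finset V, Disjoint X Y → X.card = s → Y.card = s →
    (∃ t : Finset V, IsMonoTriangle G χ true t ∧ ↑t ⊆ (↑X ∪ ↑Y : Set V) ∧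
      (t ∩ X).Nonempty) ∨
    (∃ t : Finset V, IsMonoTriangle G χ false t ∧ ↑t ⊆ (↑X ∪ ↑Y : Set V) ∧
      (t ∩ Y).Nonempty)

/-- Greedily remove monochromatic triangles from `W` until fewer than `ε n` vertices
remain. -/
lemma greedy_tiling {n : ℕ} (G : SimpleGraph (Fin n)) (χ : Sym2 (Fin n) → Bool) (ε : ℝ)
    (ha : ∀ U : Set (Fin n), ε * n ≤ (U.ncard : ℝ) →
      ∃ (col : Bool) (t : Finset (Fin n)), IsMonoTriangle G χ col t ∧ ↑t ⊆ U)
    (W : Finset (Fin n)) :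
    ∃ T : Finset (Finset (Fin n)),
      (∀ t ∈ T, (∃ c, IsMonoTriangle G χ c t) ∧ t ⊆ W) ∧
      ((T : Set (Finset (Fin n))).Pairwise Disjoint) ∧
      ((W.card : ℝ) < 3 * T.card + ε * n) := by
  induction W using Finset.strongInduction with
  | _ W ih =>
    by_cases h : (W.card : ℝ) < ε * n
    · exact ⟨∅, by simp, by simp, by simpa using h⟩
    · push_neg at h
      obtain ⟨c, t, hmono, hsub⟩ := ha (↑W) (by rwa [Set.ncard_coe_finset])
      rw [Finset.coe_subset] at hsub
      have ht3 : t.card = 3 := hmono.1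
      have htne : t.Nonempty := Finset.card_pos.mp (by omega)
      obtain ⟨T', hT1, hT2, hT3⟩ := ih (W \ t) (Finset.sdiff_ssubset hsub htne)
      have htdisj : ∀ u ∈ T', Disjoint t u := by
        intro u hu
        have h2 := (hT1 u hu).2
        rw [Finset.subset_sdiff] at h2
        exact h2.2.symm
      have htnot : t ∉ T' := by
        intro hmem
        have h2 := htdisj t hmem
        rw [disjoint_self] at h2
        rw [h2] at ht3
        simp at ht3
      refine ⟨insert t T', ?_, ?_, ?_⟩
      · intro u hu
        rcases Finset.mem_insert.mp hu with rfl | hu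
        · exact ⟨⟨c, hmono⟩, hsub⟩
        · exact ⟨(hT1 u hu).1, (hT1 u hu).2.trans Finset.sdiff_subset⟩
      · rw [Finset.coe_insert]
        haveI : Std.Symm (Disjoint : Finset (Fin n) → Finset (Fin n) → Prop) :=
          ⟨fun a b hab => hab.symm⟩
        refine (Set.pairwise_insert_of_symm).mpr
          ⟨hT2, fun u hu _ => htdisj u (Finset.mem_coe.mp hu)⟩
      · have hc : (W \ t).card + t.card = W.card :=
          Finset.card_sdiff_add_card_eq_card hsub
        have hic : (insert t T').card = T'.card + 1 :=
          Finset.card_insert_of_notMem htnot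
        have hcR : (W.card : ℝ) = ((W \ t).card : ℝ) + 3 := by
          rw [ht3] at hc; exact_mod_cast hc.symm
        rw [hic, hcR]
        push_cast
        linarith

/-- Package a disjoint family of mono triangles into the required form. -/
lemma buildTiling {n : ℕ} (G : SimpleGraph (Fin n)) (χ : Sym2 (Fin n) → Bool) (ε : ℝ)
    (col : Bool) (Fam : Finset (Finset (Fin n)))
    (hmono : ∀ a ∈ Fam, IsMonoTriangle G χ col a)
    (hdisj : ∀ a ∈ Fam, ∀ b ∈ Fam, a ≠ b → Disjoint a b)
    (hcard : (n : ℝ) / 5 - ε * n ≤ (Fam.card : ℝ)) :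
    ∃ (col : Bool) (m : ℕ) (f : Fin m → Finset (Fin n)),
      (∀ i, IsMonoTriangle G χ col (f i)) ∧
      (∀ i j, i ≠ j → Disjoint (f i) (f j)) ∧
      (n : ℝ) / 5 - ε * n ≤ (m : ℝ) := by
  refine ⟨col, Fam.card, fun i => (Fam.equivFin.symm i : Finset (Fin n)), ?_, ?_, hcard⟩
  · intro i
    exact hmono _ (Fam.equivFin.symm i).2
  · intro i j hne
    refine hdisj _ (Fam.equivFin.symm i).2 _ (Fam.equivFin.symm j).2 ?_
    intro heq
    exact hne (Fam.equivFin.symm.injective (Subtype.ext heq))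

/-- If every vertex subset of size at least `εn` of the 2-edge-coloured `n`-vertex graph
`G` contains a monochromatic triangle, and `G` is `(K₃, 4εn)`-rich, then `G` contains a
monochromatic `K₃`-tiling with at least `n/5 - εn` triangles. -/
theorem stmt16 (ε : ℝ) (hε : 0 < ε) (n : ℕ) (G : SimpleGraph (Fin n))
    (χ : Sym2 (Fin n) → Bool)
    (ha : ∀ U : Set (Fin n), ε * n ≤ (U.ncard : ℝ) →
      ∃ (col : Bool) (t : Finset (Fin n)), IsMonoTriangle G χ col t ∧ ↑t ⊆ U)
    (hb : IsRich3 G (Nat.floor (4 * ε * n))) :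
    ∃ (col : Bool) (m : ℕ) (f : Fin m → Finset (Fin n)),
      (∀ i, IsMonoTriangle G χ col (f i)) ∧
      (∀ i j, i ≠ j → Disjoint (f i) (f j)) ∧
      (n : ℝ) / 5 - ε * n ≤ (m : ℝ) := by
  classical
  set s0 := Nat.floor (4 * ε * n) with hs0def
  -- bow tie families
  set BTP : Finset (Finset (Fin n) × Finset (Fin n)) → Prop := fun F =>
    (∀ p ∈ F, IsMonoTriangle G χ true p.1 ∧ IsMonoTriangle G χ false p.2 ∧
      (p.1 ∩ p.2).card = 1) ∧
    (F : Set (Finset (Fin n) × Finset (Fin n))).Pairwise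
      (fun p q => Disjoint (p.1 ∪ p.2) (q.1 ∪ q.2)) with hBTPdef
  -- there is a maximum family of vertex-disjoint bow ties
  obtain ⟨F, hF, hFmax⟩ : ∃ F, BTP F ∧ ∀ F', BTP F' → F'.card ≤ F.card := by
    obtain ⟨F, hmem, hmax⟩ := Finset.exists_max_image
      (Finset.univ.filter BTP) Finset.card
      ⟨∅, Finset.mem_filter.mpr ⟨Finset.mem_univ _, by simp [hBTPdef]⟩⟩
    exact ⟨F, (Finset.mem_filter.mp hmem).2,
      fun F' hF' => hmax F' (Finset.mem_filter.mpr ⟨Finset.mem_univ _, hF'⟩)⟩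
  set BV := F.biUnion (fun p => p.1 ∪ p.2) with hBVdef
  set W₀ := (Finset.univ : Finset (Fin n)) \ BV with hW₀def
  have hBVsub : ∀ p ∈ F, p.1 ∪ p.2 ⊆ BV := by
    intro p hp
    rw [hBVdef]
    exact Finset.subset_biUnion_of_mem (fun p => p.1 ∪ p.2) hp
  have hdisjW : Disjoint W₀ BV := Finset.sdiff_disjoint
  have hcard5 : ∀ p ∈ F, (p.1 ∪ p.2).card = 5 := by
    intro p hp
    obtain ⟨h1, h2, h3⟩ := hF.1 p hp
    have h1' := h1.1
    have h2' := h2.1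
    have h4 := Finset.card_union_add_card_inter p.1 p.2
    omega
  have hBVcard : BV.card = 5 * F.card := by
    rw [hBVdef, Finset.card_biUnion
      (fun p hp q hq hne => hF.2 (Finset.mem_coe.mpr hp) (Finset.mem_coe.mpr hq) hne)]
    rw [Finset.sum_congr rfl hcard5, Finset.sum_const, smul_eq_mul, mul_comm]
  have hn : W₀.card + BV.card = n := by
    rw [hW₀def, Finset.card_sdiff_add_card_eq_card (Finset.subset_univ _),
      Finset.card_univ, Fintype.card_fin]
  -- greedy tiling of the remainder
  obtain ⟨T, hT1, hT2, hT3⟩ := greedy_tiling G χ ε ha W₀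
  have htcard : ∀ t ∈ T, t.card = 3 := by
    intro t ht
    obtain ⟨c, hc⟩ := (hT1 t ht).1
    exact hc.1
  have hTsub : ∀ t ∈ T, t ⊆ W₀ := fun t ht => (hT1 t ht).2
  set Tr := T.filter (fun t => IsMonoTriangle G χ true t) with hTrdef
  set Tb := T.filter (fun t => ¬ IsMonoTriangle G χ true t) with hTbdef
  have hTrsubT : Tr ⊆ T := Finset.filter_subset _ _
  have hTbsubT : Tb ⊆ T := Finset.filter_subset _ _
  have hTrTb : Tr.card + Tb.card = T.card :=
    Finset.card_filter_add_card_filter_not _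
  have hTrred : ∀ t ∈ Tr, IsMonoTriangle G χ true t := by
    intro t ht; exact (Finset.mem_filter.mp ht).2
  have hTbblue : ∀ t ∈ Tb, IsMonoTriangle G χ false t := by
    intro t ht
    rw [Finset.mem_filter] at ht
    obtain ⟨c, hc⟩ := (hT1 t ht.1).1
    cases c with
    | false => exact hc
    | true => exact absurd hc ht.2
  -- adding a new bow tie inside W₀ contradicts maximality
  have addBowtie : ∀ t u : Finset (Fin n), IsMonoTriangle G χ true t →
      IsMonoTriangle G χ false u → t ⊆ W₀ → u ⊆ W₀ →
      ∀ v, v ∈ t → v ∈ u → False := by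
    intro t u htm hum htW huW v hvt hvu
    have hint : t ∩ u = {v} := by
      apply Finset.eq_singleton_iff_unique_mem.mpr
      refine ⟨Finset.mem_inter.mpr ⟨hvt, hvu⟩, ?_⟩
      intro x hx
      by_contra hne
      rw [Finset.mem_inter] at hx
      have h1 := (htm.2 x hx.1 v hvt hne).2
      have h2 := (hum.2 x hx.2 v hvu hne).2
      rw [h1] at h2
      exact Bool.noConfusion h2
    have hnotin : (t, u) ∉ F := by
      intro hmem
      have h1 : t ∪ u ⊆ BV := hBVsub (t, u) hmem
      exact Finset.disjoint_left.mp hdisjW (htW hvt) (h1 (Finset.mem_union_left _ hvt))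
    have hBTP : BTP (insert (t, u) F) := by
      constructor
      · intro p hp
        rcases Finset.mem_insert.mp hp with rfl | hp
        · exact ⟨htm, hum, by rw [hint]; simp⟩
        · exact hF.1 p hp
      · rw [Finset.coe_insert]
        haveI : Std.Symm (fun p q : Finset (Fin n) × Finset (Fin n) =>
            Disjoint (p.1 ∪ p.2) (q.1 ∪ q.2)) := ⟨fun a b hab => hab.symm⟩
        refine (Set.pairwise_insert_of_symm).mpr
          ⟨hF.2, ?_⟩
        intro q hq _
        refine Finset.disjoint_of_subset_left (Finset.union_subset htW huW)
          (Finset.disjoint_of_subset_right (hBVsub q (Finset.mem_coe.mp hq)) hdisjW)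
    have hle := hFmax _ hBTP
    rw [Finset.card_insert_of_notMem hnotin] at hle
    omega
  -- one of the two colour classes of the greedy tiling is small
  have hkey : 3 * Tb.card < s0 ∨ 3 * Tr.card < s0 := by
    by_contra hcon
    push_neg at hcon
    obtain ⟨hb1, hb2⟩ := hcon
    have hXcard : (Tb.biUnion (fun t => t)).card = 3 * Tb.card := by
      rw [Finset.card_biUnion (fun x hx y hy hne =>
        hT2 (Finset.mem_coe.mpr (hTbsubT hx)) (Finset.mem_coe.mpr (hTbsubT hy)) hne)]
      rw [Finset.sum_congr rfl (fun t ht => htcard t (hTbsubT ht)),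
        Finset.sum_const, smul_eq_mul, mul_comm]
    have hYcard : (Tr.biUnion (fun t => t)).card = 3 * Tr.card := by
      rw [Finset.card_biUnion (fun x hx y hy hne =>
        hT2 (Finset.mem_coe.mpr (hTrsubT hx)) (Finset.mem_coe.mpr (hTrsubT hy)) hne)]
      rw [Finset.sum_congr rfl (fun t ht => htcard t (hTrsubT ht)),
        Finset.sum_const, smul_eq_mul, mul_comm]
    obtain ⟨X, hXsub, hXc⟩ := Finset.exists_subset_card_eq (show s0 ≤ (Tb.biUnion (fun t => t)).card by omega)
    obtain ⟨Y, hYsub, hYc⟩ := Finset.exists_subset_card_eq (show s0 ≤ (Tr.biUnion (fun t => t)).card by omega)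
    have hXY : Disjoint X Y := by
      refine Finset.disjoint_of_subset_left hXsub
        (Finset.disjoint_of_subset_right hYsub ?_)
      rw [Finset.disjoint_biUnion_left]
      intro a haTb
      rw [Finset.disjoint_biUnion_right]
      intro b hbTr
      have hne : a ≠ b := by
        intro h
        subst h
        rw [Finset.mem_filter] at haTb hbTr
        exact haTb.2 hbTr.2
      exact hT2 (Finset.mem_coe.mpr (hTbsubT haTb)) (Finset.mem_coe.mpr (hTrsubT hbTr)) hne
    have hXW : X ⊆ W₀ :=
      hXsub.trans (Finset.biUnion_subset.mpr (fun t ht => hTsub t (hTbsubT ht)))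
    have hYW : Y ⊆ W₀ :=
      hYsub.trans (Finset.biUnion_subset.mpr (fun t ht => hTsub t (hTrsubT ht)))
    rcases hb χ X Y hXY hXc hYc with ⟨t, htm, htsub, v, hv⟩ | ⟨t, htm, htsub, v, hv⟩
    · rw [← Finset.coe_union, Finset.coe_subset] at htsub
      rw [Finset.mem_inter] at hv
      obtain ⟨u, hu, hvu⟩ := Finset.mem_biUnion.mp (hXsub hv.2)
      exact addBowtie t u htm (hTbblue u hu)
        (htsub.trans (Finset.union_subset hXW hYW)) (hTsub u (hTbsubT hu)) v hv.1 hvu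
    · rw [← Finset.coe_union, Finset.coe_subset] at htsub
      rw [Finset.mem_inter] at hv
      obtain ⟨u, hu, hvu⟩ := Finset.mem_biUnion.mp (hYsub hv.2)
      exact addBowtie u t (hTrred u hu) htm (hTsub u (hTrsubT hu))
        (htsub.trans (Finset.union_subset hXW hYW)) v hvu hv.1
  -- numeric facts
  have hs0le : (s0 : ℝ) ≤ 4 * ε * n := Nat.floor_le (by positivity)
  have e1 : (W₀.card : ℝ) + 5 * (F.card : ℝ) = n := by
    have : W₀.card + 5 * F.card = n := by rw [← hBVcard]; exact hn
    exact_mod_cast this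
  have e3 : (Tr.card : ℝ) + (Tb.card : ℝ) = (T.card : ℝ) := by exact_mod_cast hTrTb
  have hTrnn : (0 : ℝ) ≤ (Tr.card : ℝ) := Nat.cast_nonneg _
  have hTbnn : (0 : ℝ) ≤ (Tb.card : ℝ) := Nat.cast_nonneg _
  rcases hkey with hsmall | hsmall
  · -- red tiling: red bow-tie triangles together with Tr
    have e4 : 3 * (Tb.card : ℝ) < (s0 : ℝ) := by exact_mod_cast hsmall
    have himgBV : ∀ p ∈ F, p.1 ⊆ BV := fun p hp =>
      Finset.subset_union_left.trans (hBVsub p hp)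
    refine buildTiling G χ ε true (F.image Prod.fst ∪ Tr) ?_ ?_ ?_
    · intro a haU
      rcases Finset.mem_union.mp haU with h | h
      · obtain ⟨p, hp, rfl⟩ := Finset.mem_image.mp h
        exact (hF.1 p hp).1
      · exact hTrred a h
    · intro a haU b hbU hne
      rcases Finset.mem_union.mp haU with h | h <;>
        rcases Finset.mem_union.mp hbU with h' | h'
      · obtain ⟨p, hp, rfl⟩ := Finset.mem_image.mp h
        obtain ⟨q, hq, rfl⟩ := Finset.mem_image.mp h'
        have hpq : p ≠ q := fun hhh => hne (by rw [hhh])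
        exact (hF.2 (Finset.mem_coe.mpr hp) (Finset.mem_coe.mpr hq) hpq).mono
          Finset.subset_union_left Finset.subset_union_left
      · obtain ⟨p, hp, rfl⟩ := Finset.mem_image.mp h
        exact (hdisjW.symm.mono (himgBV p hp) (hTsub b (hTrsubT h')))
      · obtain ⟨q, hq, rfl⟩ := Finset.mem_image.mp h'
        exact (hdisjW.mono (hTsub a (hTrsubT h)) (himgBV q hq))
      · exact hT2 (Finset.mem_coe.mpr (hTrsubT h)) (Finset.mem_coe.mpr (hTrsubT h')) hne
    · have hinjF : (F.image Prod.fst).card = F.card := by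
        apply Finset.card_image_of_injOn
        intro p hp q hq heq
        by_contra hne
        have disj := (hF.2 (Finset.mem_coe.mpr hp) (Finset.mem_coe.mpr hq) hne).mono
          Finset.subset_union_left Finset.subset_union_left
        rw [heq, disjoint_self] at disj
        have h33 := (hF.1 q hq).1.1
        rw [disj] at h33
        simp at h33
      have hdisjU : Disjoint (F.image Prod.fst) Tr := by
        rw [Finset.disjoint_left]
        intro a haimg haTr
        obtain ⟨p, hp, rfl⟩ := Finset.mem_image.mp haimg
        have h3 : p.1.Nonempty := Finset.card_pos.mp (by rw [(hF.1 p hp).1.1]; omega)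
        obtain ⟨v, hv⟩ := h3
        exact Finset.disjoint_left.mp hdisjW (hTsub _ (hTrsubT haTr) hv) (himgBV p hp hv)
      rw [Finset.card_union_of_disjoint hdisjU, hinjF]
      have : ((F.card + Tr.card : ℕ) : ℝ) = (F.card : ℝ) + (Tr.card : ℝ) := by push_cast; ring
      rw [this]
      linarith
  · -- blue tiling: blue bow-tie triangles together with Tb
    have e4 : 3 * (Tr.card : ℝ) < (s0 : ℝ) := by exact_mod_cast hsmall
    have himgBV : ∀ p ∈ F, p.2 ⊆ BV := fun p hp =>
      Finset.subset_union_right.trans (hBVsub p hp)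
    refine buildTiling G χ ε false (F.image Prod.snd ∪ Tb) ?_ ?_ ?_
    · intro a haU
      rcases Finset.mem_union.mp haU with h | h
      · obtain ⟨p, hp, rfl⟩ := Finset.mem_image.mp h
        exact (hF.1 p hp).2.1
      · exact hTbblue a h
    · intro a haU b hbU hne
      rcases Finset.mem_union.mp haU with h | h <;>
        rcases Finset.mem_union.mp hbU with h' | h'
      · obtain ⟨p, hp, rfl⟩ := Finset.mem_image.mp h
        obtain ⟨q, hq, rfl⟩ := Finset.mem_image.mp h'
        have hpq : p ≠ q := fun hhh => hne (by rw [hhh])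
        exact (hF.2 (Finset.mem_coe.mpr hp) (Finset.mem_coe.mpr hq) hpq).mono
          Finset.subset_union_right Finset.subset_union_right
      · obtain ⟨p, hp, rfl⟩ := Finset.mem_image.mp h
        exact (hdisjW.symm.mono (himgBV p hp) (hTsub b (hTbsubT h')))
      · obtain ⟨q, hq, rfl⟩ := Finset.mem_image.mp h'
        exact (hdisjW.mono (hTsub a (hTbsubT h)) (himgBV q hq))
      · exact hT2 (Finset.mem_coe.mpr (hTbsubT h)) (Finset.mem_coe.mpr (hTbsubT h')) hne
    · have hinjF : (F.image Prod.snd).card = F.card := by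
        apply Finset.card_image_of_injOn
        intro p hp q hq heq
        by_contra hne
        have disj := (hF.2 (Finset.mem_coe.mpr hp) (Finset.mem_coe.mpr hq) hne).mono
          Finset.subset_union_right Finset.subset_union_right
        rw [heq, disjoint_self] at disj
        have h33 := (hF.1 q hq).2.1.1
        rw [disj] at h33
        simp at h33
      have hdisjU : Disjoint (F.image Prod.snd) Tb := by
        rw [Finset.disjoint_left]
        intro a haimg haTb
        obtain ⟨p, hp, rfl⟩ := Finset.mem_image.mp haimg
        have h3 : p.2.Nonempty := Finset.card_pos.mp (by rw [(hF.1 p hp).2.1.1]; omega)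
        obtain ⟨v, hv⟩ := h3
        exact Finset.disjoint_left.mp hdisjW (hTsub _ (hTbsubT haTb) hv) (himgBV p hp hv)
      rw [Finset.card_union_of_disjoint hdisjU, hinjF]
      have : ((F.card + Tb.card : ℕ) : ℝ) = (F.card : ℝ) + (Tb.card : ℝ) := by push_cast; ring
      rw [this]
      linarith
end
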